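/- arXiv:1509.08100 — 8 statements merged into one kernel-verified Lean document; each statement's English description precedes it below -/
import Mathlib

section
/- Let d be an MPT density with tail index γ and tail constant C_d. Then the function g(x) = d(x)·x^(γ+1) is strictly increasing on (0, ∞). -/
open MeasureTheory Filter

/-- Cumulative distribution function of a density `d` with respect to Lebesgue measure. -/
noncomputable def cdf (d : ℝ → ℝ) (x : ℝ) : ℝ := ∫ t in Set.Iic x, d t

/-- A monotone polynomial tail (MPT) density with tail index `γ` and tail constant `Cd`:
a probability density function that is even (or supported on the nonnegative half-line),
strictly positive on `(0, ∞)`, satisfies `d x * x ^ (γ + 1) → Cd` as `x → ∞`, and has a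
monotone likelihood ratio: for every `θ > 1`, `x ↦ d (x / θ) / d x` is strictly increasing
on `(0, ∞)`. -/
structure IsMPT (d : ℝ → ℝ) (γ Cd : ℝ) : Prop where
  gamma_pos : 0 < γ
  Cd_pos : 0 < Cd
  nonneg : ∀ x, 0 ≤ d x
  integrable : Integrable d
  integral_one : ∫ x, d x = 1
  even_or_halfline : (∀ x, d (-x) = d x) ∨ (∀ x < 0, d x = 0)
  pos : ∀ x, 0 < x → 0 < d x
  tail : Tendsto (fun x => d x * x ^ (γ + 1)) atTop (nhds Cd)
  mlr : ∀ θ : ℝ, 1 < θ → StrictMonoOn (fun x => d (x / θ) / d x) (Set.Ioi 0)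

/-- Proposition 1(1): for an MPT density `d`, `g x = d x * x ^ (γ + 1)` is strictly
increasing on `(0, ∞)`. -/
theorem mpt_g_strictMonoOn (d : ℝ → ℝ) (γ Cd : ℝ) (h : IsMPT d γ Cd) :
    StrictMonoOn (fun x => d x * x ^ (γ + 1)) (Set.Ioi 0) := by
  intro x hx y hy hxy
  simp only [Set.mem_Ioi] at hx hy
  set θ := y / x with hθdef
  have hθ : 1 < θ := (one_lt_div hx).mpr hxy
  have hθ0 : 0 < θ := lt_trans one_pos hθ
  have hxyθ : y / θ = x := by
    field_simp [hθdef]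
    rw [hθdef, div_mul_cancel₀ y hx.ne']
  have hθp : (0:ℝ) < θ ^ (γ+1) := Real.rpow_pos_of_pos hθ0 _
  -- limit of likelihood ratio is θ^(γ+1)
  have hlim : Tendsto (fun t => d (t / θ) / d t) atTop (nhds (θ ^ (γ+1))) := by
    have hdiv : Tendsto (fun t : ℝ => t / θ) atTop atTop :=
      tendsto_id.atTop_div_const hθ0
    have h1 : Tendsto (fun t => d (t/θ) * (t/θ) ^ (γ+1)) atTop (nhds Cd) :=
      h.tail.comp hdiv
    have h3 : Tendsto (fun t => (d (t/θ) * (t/θ)^(γ+1)) / (d t * t^(γ+1)) * θ^(γ+1))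
        atTop (nhds (Cd / Cd * θ^(γ+1))) :=
      (h1.div h.tail (ne_of_gt h.Cd_pos)).mul_const _
    rw [div_self (ne_of_gt h.Cd_pos), one_mul] at h3
    refine h3.congr' ?_
    filter_upwards [eventually_gt_atTop (0:ℝ)] with t ht
    have hdt := (h.pos t ht).ne'
    have hrp : (0:ℝ) < t ^ (γ+1) := Real.rpow_pos_of_pos ht _
    have hdr : (t/θ)^(γ+1) = t^(γ+1) / θ^(γ+1) := Real.div_rpow ht.le hθ0.le _
    rw [hdr]
    field_simp
  have hmono := h.mlr θ hθ
  -- d(y/θ)/d y < θ^(γ+1)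
  obtain ⟨z, hz⟩ : ∃ z, y < z := exists_gt y
  have hzpos : (0:ℝ) < z := hy.trans hz
  have hyz : d (y/θ)/d y < d (z/θ)/d z :=
    hmono (Set.mem_Ioi.mpr hy) (Set.mem_Ioi.mpr hzpos) hz
  have hle : d (z/θ)/d z ≤ θ^(γ+1) := by
    refine ge_of_tendsto hlim ?_
    filter_upwards [eventually_ge_atTop z] with t ht
    simpa using hmono.monotoneOn (Set.mem_Ioi.mpr hzpos)
      (Set.mem_Ioi.mpr (hzpos.trans_le ht)) ht
  have hy2 : d x / d y < θ^(γ+1) := by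
    rw [← hxyθ]; exact hyz.trans_le hle
  have hθeq : θ^(γ+1) = y^(γ+1) / x^(γ+1) := Real.div_rpow hy.le hx.le _
  rw [hθeq] at hy2
  have hxrp : (0:ℝ) < x ^ (γ+1) := Real.rpow_pos_of_pos hx _
  have := (div_lt_div_iff₀ (h.pos y hy) hxrp).mp hy2
  simpa [mul_comm] using this
end

section
/- Let d be an MPT density with tail index γ and tail constant C_d, with cdf D. Then the function h(x) = x^γ·(1 − D(x)) is strictly increasing on (0, ∞). -/
open MeasureTheory Filter

/-- Key pointwise inequality: for `θ > 1` and `s > 0`, `d s < θ ^ (γ+1) * d (θ * s)`. -/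
lemma mpt_key (d : ℝ → ℝ) (γ Cd : ℝ) (h : IsMPT d γ Cd) {θ : ℝ} (hθ : 1 < θ)
    {s : ℝ} (hs : 0 < s) : d s < θ ^ (γ + 1) * d (θ * s) := by
  have hθ0 : (0:ℝ) < θ := lt_trans one_pos hθ
  have hθp : (0:ℝ) < θ ^ (γ + 1) := Real.rpow_pos_of_pos hθ0 _
  -- g is strictly antitone on Ioi 0
  set g : ℝ → ℝ := fun s => d (θ * s) / d s with hg
  have hanti : StrictAntiOn g (Set.Ioi 0) := by
    intro a ha b hb hab
    have ha' : (0:ℝ) < a := ha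
    have hb' : (0:ℝ) < b := hb
    have h1 : d (θ * a / θ) / d (θ * a) < d (θ * b / θ) / d (θ * b) := by
      have := h.mlr θ hθ (Set.mem_Ioi.mpr (mul_pos hθ0 ha'))
        (Set.mem_Ioi.mpr (mul_pos hθ0 hb'))
        (by exact (mul_lt_mul_iff_right₀ hθ0).mpr hab)
      exact this
    rw [mul_div_cancel_left₀ _ hθ0.ne', mul_div_cancel_left₀ _ hθ0.ne'] at h1
    have hda : 0 < d a := h.pos a ha'
    have hdb : 0 < d b := h.pos b hb'
    have hdθa : 0 < d (θ * a) := h.pos _ (mul_pos hθ0 ha')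
    have hdθb : 0 < d (θ * b) := h.pos _ (mul_pos hθ0 hb')
    rw [div_lt_div_iff₀ hdθa hdθb] at h1
    rw [hg]
    simp only
    rw [div_lt_div_iff₀ hdb hda]
    nlinarith [h1]
  -- g tends to (θ ^ (γ+1))⁻¹ at ∞
  have hlim : Tendsto g atTop (nhds (θ ^ (γ + 1))⁻¹) := by
    have htop : Tendsto (fun s : ℝ => θ * s) atTop atTop :=
      Tendsto.const_mul_atTop hθ0 tendsto_id
    have h1 : Tendsto (fun s => d (θ * s) * (θ * s) ^ (γ + 1)) atTop (nhds Cd) :=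
      h.tail.comp htop
    have h2 : Tendsto (fun s => d s * s ^ (γ + 1)) atTop (nhds Cd) := h.tail
    have h3 : Tendsto
        (fun s => (d (θ * s) * (θ * s) ^ (γ + 1)) / (d s * s ^ (γ + 1)) / θ ^ (γ + 1))
        atTop (nhds (Cd / Cd / θ ^ (γ + 1))) :=
      (h1.div h2 h.Cd_pos.ne').div_const _
    rw [div_self h.Cd_pos.ne'] at h3
    have heq : ∀ᶠ s in atTop,
        (d (θ * s) * (θ * s) ^ (γ + 1)) / (d s * s ^ (γ + 1)) / θ ^ (γ + 1) = g s := by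
      filter_upwards [eventually_gt_atTop 0] with s hs
      have hsp : (0:ℝ) < s ^ (γ + 1) := Real.rpow_pos_of_pos hs _
      have hds : 0 < d s := h.pos s hs
      have hmul : (θ * s) ^ (γ + 1) = θ ^ (γ + 1) * s ^ (γ + 1) :=
        Real.mul_rpow hθ0.le hs.le
      rw [hg]
      simp only
      rw [hmul]
      field_simp
    have : Tendsto g atTop (nhds (1 / θ ^ (γ + 1))) := Tendsto.congr' heq h3
    simpa [one_div] using this
  -- antitone + limit ⇒ g s > limit
  have hgs : (θ ^ (γ + 1))⁻¹ < g s := by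
    have hgs1 : g (s + 1) < g s := hanti (Set.mem_Ioi.mpr hs)
      (Set.mem_Ioi.mpr (by linarith)) (by linarith)
    have hle : (θ ^ (γ + 1))⁻¹ ≤ g (s + 1) := by
      refine le_of_tendsto hlim ?_
      filter_upwards [eventually_gt_atTop (s + 1)] with u hu
      exact (hanti (Set.mem_Ioi.mpr (by linarith)) (Set.mem_Ioi.mpr (by linarith)) hu).le
    linarith
  have hds : 0 < d s := h.pos s hs
  rw [hg] at hgs
  simp only at hgs
  rw [inv_lt_iff_one_lt_mul₀' hθp, ← mul_div_assoc, lt_div_iff₀ hds] at hgs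
  linarith

lemma mpt_tail_eq (d : ℝ → ℝ) (γ Cd : ℝ) (h : IsMPT d γ Cd) (x : ℝ) :
    1 - cdf d x = ∫ t in Set.Ioi x, d t := by
  have := intervalIntegral.integral_Iic_add_Ioi (b := x) (μ := volume)
    h.integrable.integrableOn h.integrable.integrableOn
  rw [h.integral_one] at this
  rw [cdf]
  linarith

/-- Proposition 1(2): for an MPT density `d` with cdf `D`, `h x = x ^ γ * (1 - D x)` is
strictly increasing on `(0, ∞)`. -/
theorem mpt_h_strictMonoOn (d : ℝ → ℝ) (γ Cd : ℝ) (h : IsMPT d γ Cd) :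
    StrictMonoOn (fun x => x ^ γ * (1 - cdf d x)) (Set.Ioi 0) := by
  intro x hx y hy hxy
  have hx0 : (0:ℝ) < x := hx
  have hy0 : (0:ℝ) < y := hy
  set θ : ℝ := y / x with hθdef
  have hθ : 1 < θ := (one_lt_div hx0).mpr hxy
  have hθ0 : (0:ℝ) < θ := lt_trans one_pos hθ
  have hyx : y = θ * x := by rw [hθdef, div_mul_cancel₀ _ hx0.ne']
  have hθp : (0:ℝ) < θ ^ (γ + 1) := Real.rpow_pos_of_pos hθ0 _
  simp only
  rw [mpt_tail_eq d γ Cd h x, mpt_tail_eq d γ Cd h y]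
  -- substitution
  have hsub : (∫ t in Set.Ioi x, d (θ * t)) = θ⁻¹ * ∫ t in Set.Ioi y, d t := by
    rw [hyx]
    simpa using integral_comp_mul_left_Ioi d x hθ0
  have hint1 : IntegrableOn d (Set.Ioi x) := h.integrable.integrableOn
  have hint2 : IntegrableOn (fun t => d (θ * t)) (Set.Ioi x) :=
    (h.integrable.comp_mul_left' hθ0.ne').integrableOn
  -- strict integral inequality
  have hposint : (∫ t in Set.Ioi x, d t) < ∫ t in Set.Ioi x, θ ^ (γ + 1) * d (θ * t) := by
    have hintc : IntegrableOn (fun t => θ ^ (γ + 1) * d (θ * t)) (Set.Ioi x) :=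
      hint2.const_mul _
    have hF : (0:ℝ) < ∫ t in Set.Ioi x, (θ ^ (γ + 1) * d (θ * t) - d t) := by
      rw [setIntegral_pos_iff_support_of_nonneg_ae]
      · rw [Set.inter_eq_right.mpr]
        · simp [Real.volume_Ioi]
        · intro t ht
          have : d t < θ ^ (γ + 1) * d (θ * t) :=
            mpt_key d γ Cd h hθ (lt_trans hx0 ht)
          simp only [Function.mem_support]
          intro hc
          rw [sub_eq_zero] at hc
          exact absurd hc.symm (ne_of_lt this)
      · rw [Filter.EventuallyLE, ae_restrict_iff' measurableSet_Ioi]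
        filter_upwards with t
        intro ht
        have : d t < θ ^ (γ + 1) * d (θ * t) :=
          mpt_key d γ Cd h hθ (lt_trans hx0 ht)
        simp only [Pi.zero_apply]
        linarith
      · exact hintc.sub hint1
    rw [integral_sub hintc hint1] at hF
    linarith
  -- rewrite the θ^(γ+1) integral
  have hconst : (∫ t in Set.Ioi x, θ ^ (γ + 1) * d (θ * t))
      = θ ^ (γ + 1) * ∫ t in Set.Ioi x, d (θ * t) := integral_const_mul _ _
  have hygamma : y ^ γ = θ ^ γ * x ^ γ := by
    rw [hyx, Real.mul_rpow hθ0.le hx0.le]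
  have hθγ : θ ^ (γ + 1) = θ ^ γ * θ := by
    rw [Real.rpow_add hθ0, Real.rpow_one]
  have key : x ^ γ * (∫ t in Set.Ioi x, d t) < y ^ γ * ∫ t in Set.Ioi y, d t := by
    have hxγ : (0:ℝ) < x ^ γ := Real.rpow_pos_of_pos hx0 _
    have h1 : x ^ γ * (∫ t in Set.Ioi x, d t)
        < x ^ γ * ∫ t in Set.Ioi x, θ ^ (γ + 1) * d (θ * t) :=
      (mul_lt_mul_iff_right₀ hxγ).mpr hposint
    calc x ^ γ * (∫ t in Set.Ioi x, d t)
        < x ^ γ * ∫ t in Set.Ioi x, θ ^ (γ + 1) * d (θ * t) := h1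
      _ = y ^ γ * ∫ t in Set.Ioi y, d t := by
          rw [hconst, hsub, hygamma, hθγ]
          field_simp
  exact key
end

section
/- Let d be an MPT density with tail index γ and tail constant C_d, with cdf D. Then for every θ > 1, the function x ↦ (1 − D(x/θ))/(1 − D(x)) is strictly increasing on (0, ∞). -/
open MeasureTheory Filter

section Aux

variable {d : ℝ → ℝ} {γ Cd θ : ℝ} (h : IsMPT d γ Cd)
include h

/-- survival function -/
noncomputable def surv (d : ℝ → ℝ) (x : ℝ) : ℝ := ∫ t in Set.Ioi x, d t

lemma one_sub_cdf (x : ℝ) : 1 - cdf d x = surv d x := by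
  have := MeasureTheory.integral_add_compl (measurableSet_Iic (a := x)) h.integrable
  rw [Set.compl_Iic] at this
  rw [cdf, surv, ← h.integral_one, ← this]; ring

lemma surv_pos (x : ℝ) : 0 < surv d x := by
  have hsub : Set.Ioi (max x 1) ⊆ Set.Ioi x := Set.Ioi_subset_Ioi (le_max_left _ _)
  have h1 : 0 < ∫ t in Set.Ioi (max x 1), d t := by
    rw [setIntegral_pos_iff_support_of_nonneg_ae
      (Filter.Eventually.of_forall fun t => h.nonneg t) (h.integrable.integrableOn)]
    have : Set.Ioi (max x 1) ⊆ Function.support d ∩ Set.Ioi (max x 1) := fun t ht =>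
      ⟨(h.pos t (lt_of_lt_of_le zero_lt_one (le_of_lt (lt_of_le_of_lt (le_max_right x 1) ht)))).ne',
        ht⟩
    calc (0 : ENNReal) < volume (Set.Ioi (max x 1)) := by simp
      _ ≤ _ := measure_mono this
  exact lt_of_lt_of_le h1 (setIntegral_mono_set h.integrable.integrableOn
    (Filter.Eventually.of_forall fun t => h.nonneg t)
    (HasSubset.Subset.eventuallyLE hsub))

omit h in
lemma surv_div (hθ : (1:ℝ) < θ) (x : ℝ) :
    surv d (x / θ) = θ⁻¹ * ∫ t in Set.Ioi x, d (t / θ) := by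
  have hθ0 : (0:ℝ) < θ := lt_trans zero_lt_one hθ
  have hb : (0:ℝ) < θ⁻¹ := inv_pos.mpr hθ0
  have key := integral_comp_mul_left_Ioi d x hb
  simp only [smul_eq_mul, inv_inv] at key
  have h2 : ∀ t : ℝ, θ⁻¹ * t = t / θ := fun t => by ring
  simp only [h2] at key
  rw [surv, key, ← mul_assoc, inv_mul_cancel₀ (ne_of_gt hθ0), one_mul]

end Aux

/-- Proposition 1(3): for an MPT density `d` with cdf `D` and any `θ > 1`,
`x ↦ (1 - D (x / θ)) / (1 - D x)` is strictly increasing on `(0, ∞)`. -/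
theorem mpt_survival_ratio_strictMonoOn (d : ℝ → ℝ) (γ Cd : ℝ) (h : IsMPT d γ Cd)
    (θ : ℝ) (hθ : 1 < θ) :
    StrictMonoOn (fun x => (1 - cdf d (x / θ)) / (1 - cdf d x)) (Set.Ioi 0) := by
  have hθ0 : (0:ℝ) < θ := lt_trans zero_lt_one hθ
  intro x hx y hy hxy
  simp only [Set.mem_Ioi] at hx hy
  simp only [one_sub_cdf h]
  rw [div_lt_div_iff₀ (surv_pos h x) (surv_pos h y)]
  -- main inequality: surv d (x/θ) * surv d y < surv d (y/θ) * surv d x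
  rw [surv_div hθ x, surv_div hθ y]
  have hf : Integrable (fun t => d (t / θ)) := h.integrable.comp_div hθ0.ne'
  set f : ℝ → ℝ := fun t => d (t / θ) with hfdef
  -- split
  have hIoi : Set.Ioi x = Set.Ioc x y ∪ Set.Ioi y := (Set.Ioc_union_Ioi_eq_Ioi hxy.le).symm
  have hdisj : Disjoint (Set.Ioc x y) (Set.Ioi y) := Set.Ioc_disjoint_Ioi_same
  have splitf : (∫ t in Set.Ioi x, f t) = (∫ t in Set.Ioc x y, f t) + ∫ t in Set.Ioi y, f t := by
    rw [hIoi]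
    exact setIntegral_union hdisj measurableSet_Ioi hf.integrableOn hf.integrableOn
  have splitd : surv d x = (∫ t in Set.Ioc x y, d t) + surv d y := by
    rw [surv, hIoi]
    exact setIntegral_union hdisj measurableSet_Ioi h.integrable.integrableOn
      h.integrable.integrableOn
  set A := ∫ t in Set.Ioc x y, f t with hAdef
  set B := ∫ t in Set.Ioi y, f t with hBdef
  set a := ∫ t in Set.Ioc x y, d t with hadef
  set b := surv d y with hbdef
  have hb : 0 < b := surv_pos h y
  set c := d (y / θ) / d y with hc
  have hmlr := h.mlr θ hθ
  -- a > 0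
  have ha : 0 < a := by
    rw [hadef, integral_Ioc_eq_integral_Ioo, setIntegral_pos_iff_support_of_nonneg_ae
      (Filter.Eventually.of_forall fun t => h.nonneg t) h.integrable.integrableOn]
    have hss : Set.Ioo x y ⊆ Function.support d ∩ Set.Ioo x y := fun t ht =>
      ⟨(h.pos t (lt_trans hx ht.1)).ne', ht⟩
    calc (0:ENNReal) < volume (Set.Ioo x y) := by
          rw [Real.volume_Ioo]; simp [sub_pos.mpr hxy]
      _ ≤ _ := measure_mono hss
  -- A < c * a
  have hA : A < c * a := by
    have h1 : A = ∫ t in Set.Ioo x y, f t := integral_Ioc_eq_integral_Ioo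
    have h2 : c * a = ∫ t in Set.Ioo x y, c * d t := by
      rw [hadef, integral_Ioc_eq_integral_Ioo, ← integral_const_mul]
    rw [h1, h2, ← sub_pos, ← integral_sub (by exact (h.integrable.integrableOn.const_mul c)) hf.integrableOn]
    rw [setIntegral_pos_iff_support_of_nonneg_ae]
    · have hss : Set.Ioo x y ⊆ Function.support (fun t => c * d t - f t) ∩ Set.Ioo x y := by
        intro t ht
        refine ⟨?_, ht⟩
        have hdt : 0 < d t := h.pos t (lt_trans hx ht.1)
        have hlt : f t / d t < c := hmlr (Set.mem_Ioi.mpr (lt_trans hx ht.1))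
          (Set.mem_Ioi.mpr (lt_trans hx (lt_trans ht.1 ht.2))) ht.2
        have : f t < c * d t := by
          rw [div_lt_iff₀ hdt] at hlt; linarith [hlt]
        simp only [Function.mem_support]
        intro hcon
        nlinarith
      calc (0:ENNReal) < volume (Set.Ioo x y) := by
            rw [Real.volume_Ioo]; simp [sub_pos.mpr hxy]
        _ ≤ _ := measure_mono hss
    · filter_upwards [ae_restrict_mem measurableSet_Ioo] with t ht
      have hdt : 0 < d t := h.pos t (lt_trans hx ht.1)
      have hlt : f t / d t < c := hmlr (Set.mem_Ioi.mpr (lt_trans hx ht.1))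
        (Set.mem_Ioi.mpr (lt_trans hx (lt_trans ht.1 ht.2))) ht.2
      rw [div_lt_iff₀ hdt] at hlt
      simp only [Pi.zero_apply, sub_nonneg]
      linarith
    · exact ((h.integrable.integrableOn.const_mul c).sub hf.integrableOn)
  -- c * b ≤ B
  have hB : c * b ≤ B := by
    have h2 : c * b = ∫ t in Set.Ioi y, c * d t := by rw [hbdef, surv, ← integral_const_mul]
    rw [h2]
    refine setIntegral_mono_on (h.integrable.integrableOn.const_mul c) hf.integrableOn
      measurableSet_Ioi ?_
    intro t ht
    simp only [Set.mem_Ioi] at ht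
    have hdt : 0 < d t := h.pos t (lt_trans (lt_trans hx hxy) ht)
    have hle : c ≤ f t / d t :=
      le_of_lt (hmlr (Set.mem_Ioi.mpr (lt_trans hx hxy)) (Set.mem_Ioi.mpr (lt_trans (lt_trans hx hxy) ht)) ht)
    calc c * d t ≤ (f t / d t) * d t := by nlinarith
      _ = f t := div_mul_cancel₀ _ hdt.ne'
  -- conclude
  have key : (A + B) * b < B * (a + b) := by nlinarith
  rw [splitf, splitd]
  calc θ⁻¹ * (A + B) * b < θ⁻¹ * (B * (a + b)) := by
        rw [mul_assoc]
        exact mul_lt_mul_of_pos_left key (inv_pos.mpr hθ0)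
    _ = θ⁻¹ * B * (a + b) := by ring
end

section
/- Let d be an MPT density with tail index γ and tail constant C_d, with cdf D. Then the function f(x) = 2x·d(x)/γ + 2D(x) − 1 is strictly increasing on (0, ∞). -/
open MeasureTheory Filter

/-- The function `x ↦ d x * x ^ (γ+1)` is strictly monotone on `(0, ∞)` for an MPT density. -/
lemma mpt_g_lt {d : ℝ → ℝ} {γ Cd : ℝ} (h : IsMPT d γ Cd) {u x : ℝ}
    (hu : 0 < u) (hux : u < x) : d u * u ^ (γ + 1) < d x * x ^ (γ + 1) := by
  have hxpos : 0 < x := hu.trans hux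
  set θ : ℝ := x / u with hθdef
  have hθ : 1 < θ := (one_lt_div hu).2 hux
  have hθ0 : 0 < θ := lt_trans one_pos hθ
  have hF := h.mlr θ hθ
  -- the likelihood ratio tends to θ ^ (γ+1) at infinity
  have hlim : Tendsto (fun z => d (z / θ) / d z) atTop (nhds (θ ^ (γ + 1))) := by
    have h1 : Tendsto (fun z => d (z / θ) * (z / θ) ^ (γ + 1)) atTop (nhds Cd) :=
      h.tail.comp (Tendsto.atTop_div_const hθ0 tendsto_id)
    have h3 : Tendsto
        (fun z => (d (z / θ) * (z / θ) ^ (γ + 1)) / (d z * z ^ (γ + 1)) * θ ^ (γ + 1))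
        atTop (nhds (Cd / Cd * θ ^ (γ + 1))) :=
      (h1.div h.tail (ne_of_gt h.Cd_pos)).mul_const _
    rw [div_self (ne_of_gt h.Cd_pos), one_mul] at h3
    refine h3.congr' ?_
    filter_upwards [eventually_gt_atTop (0 : ℝ)] with z hz
    have hdz : d z ≠ 0 := (h.pos z hz).ne'
    have hzp : (0:ℝ) < z ^ (γ + 1) := Real.rpow_pos_of_pos hz _
    have hθp : (0:ℝ) < θ ^ (γ + 1) := Real.rpow_pos_of_pos hθ0 _
    rw [Real.div_rpow hz.le hθ0.le]
    field_simp
  -- each value of the (strictly increasing) ratio is below the limit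
  have hmemx : x ∈ Set.Ioi (0:ℝ) := hxpos
  have hmemx1 : x + 1 ∈ Set.Ioi (0:ℝ) := by simp only [Set.mem_Ioi]; linarith
  have hle : d ((x + 1) / θ) / d (x + 1) ≤ θ ^ (γ + 1) := by
    refine ge_of_tendsto hlim ?_
    filter_upwards [eventually_ge_atTop (x + 1)] with z hz
    rcases eq_or_lt_of_le hz with rfl | hlt
    · exact le_refl _
    · exact (hF hmemx1 (by simp only [Set.mem_Ioi]; linarith) hlt).le
  have hlt : d (x / θ) / d x < θ ^ (γ + 1) :=
    lt_of_lt_of_le (hF hmemx hmemx1 (lt_add_one x)) hle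
  have hxθ : x / θ = u := by
    rw [hθdef]; field_simp
  rw [hxθ] at hlt
  have h4 : θ ^ (γ + 1) = x ^ (γ + 1) / u ^ (γ + 1) := Real.div_rpow hxpos.le hu.le (γ + 1)
  rw [h4, div_lt_div_iff₀ (h.pos x hxpos) (Real.rpow_pos_of_pos hu _)] at hlt
  linarith

/-- Proposition 1(4): for an MPT density `d` with cdf `D`,
`f x = 2 * x * d x / γ + 2 * D x - 1` is strictly increasing on `(0, ∞)`. -/
theorem mpt_f_strictMonoOn (d : ℝ → ℝ) (γ Cd : ℝ) (h : IsMPT d γ Cd) :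
    StrictMonoOn (fun x => 2 * x * d x / γ + 2 * cdf d x - 1) (Set.Ioi 0) := by
  intro x hx y hy hxy
  simp only [Set.mem_Ioi] at hx hy
  have hγ := h.gamma_pos
  set a : ℝ := d x * x ^ (γ + 1) with ha
  set b : ℝ := d y * y ^ (γ + 1) with hb
  set p : ℝ := x ^ (-γ) with hp
  set q : ℝ := y ^ (-γ) with hq
  have hg : a < b := mpt_g_lt h hx hxy
  have hq0 : 0 < q := Real.rpow_pos_of_pos hy _
  have ha0 : 0 < a := mul_pos (h.pos x hx) (Real.rpow_pos_of_pos hx _)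
  -- x * d x = a * p  and  y * d y = b * q
  have hxd : x * d x = a * p := by
    rw [ha, hp, mul_assoc, ← Real.rpow_add hx]
    rw [show γ + 1 + -γ = 1 by ring, Real.rpow_one]
    ring
  have hyd : y * d y = b * q := by
    rw [hb, hq, mul_assoc, ← Real.rpow_add hy]
    rw [show γ + 1 + -γ = 1 by ring, Real.rpow_one]
    ring
  -- difference of cdfs as an interval integral
  have hDint : cdf d y - cdf d x = ∫ t in x..y, d t :=
    intervalIntegral.integral_Iic_sub_Iic h.integrable.integrableOn h.integrable.integrableOn
  -- lower bound the integrand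
  have hmono : ∀ t ∈ Set.Icc x y, a * t ^ (-(γ + 1)) ≤ d t := by
    intro t ht
    have ht0 : 0 < t := lt_of_lt_of_le hx ht.1
    have hga : a ≤ d t * t ^ (γ + 1) := by
      rcases eq_or_lt_of_le ht.1 with rfl | hlt
      · exact le_refl _
      · exact (mpt_g_lt h hx hlt).le
    have h5 : t ^ (γ + 1) * t ^ (-(γ + 1)) = 1 := by
      rw [← Real.rpow_add ht0, show γ + 1 + -(γ + 1) = 0 by ring, Real.rpow_zero]
    calc a * t ^ (-(γ + 1)) ≤ (d t * t ^ (γ + 1)) * t ^ (-(γ + 1)) :=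
          mul_le_mul_of_nonneg_right hga (Real.rpow_nonneg ht0.le _)
      _ = d t := by rw [mul_assoc, h5, mul_one]
  have hnm : (0:ℝ) ∉ Set.uIcc x y := by
    rw [Set.uIcc_of_le hxy.le]
    intro h0
    exact absurd h0.1 (not_le.2 hx)
  have hii1 : IntervalIntegrable (fun t => a * t ^ (-(γ + 1))) volume x y :=
    (intervalIntegral.intervalIntegrable_rpow (Or.inr hnm)).const_mul a
  have hii2 : IntervalIntegrable d volume x y := h.integrable.intervalIntegrable
  have hle := intervalIntegral.integral_mono_on hxy.le hii1 hii2 hmono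
  have hcalc : (∫ t in x..y, a * t ^ (-(γ + 1))) = a * ((q - p) / (-γ)) := by
    rw [intervalIntegral.integral_const_mul,
      integral_rpow (Or.inr ⟨by intro hc; apply hγ.ne'; linarith [neg_eq_iff_eq_neg.mp hc], hnm⟩),
      show -(γ + 1) + 1 = -γ by ring]
  have hD' : a * (p - q) / γ ≤ cdf d y - cdf d x := by
    rw [hDint]
    calc a * (p - q) / γ = a * ((q - p) / (-γ)) := by ring
      _ = ∫ t in x..y, a * t ^ (-(γ + 1)) := hcalc.symm
      _ ≤ ∫ t in x..y, d t := hle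
  have step1 : a * q / γ < b * q / γ := by
    apply div_lt_div_of_pos_right ?_ hγ
    exact mul_lt_mul_of_pos_right hg hq0
  simp only
  rw [show (2:ℝ) * x * d x = 2 * (a * p) by rw [mul_assoc, hxd],
    show (2:ℝ) * y * d y = 2 * (b * q) by rw [mul_assoc, hyd]]
  have e1 : 2 * (a * p) / γ = 2 * (a * p / γ) := by ring
  have e2 : 2 * (b * q) / γ = 2 * (b * q / γ) := by ring
  have e3 : a * p / γ = a * (p - q) / γ + a * q / γ := by ring
  linarith
end

section
/- Under the asymptotic framework, any sequence ω_m of positive solutions of the Bayes oracle equation (1+u_m)^(−1/2)·d(ω·(1+u_m)^(−1/2))/d(ω) = v_m satisfies ω_m²/(1+u_m) → C and ω_m²/(C·(v_m/C_0)^(2/γ)) → 1 as m → ∞. -/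
open MeasureTheory Filter Topology

variable {d : ℝ → ℝ} {γ Cd : ℝ}

/-- The likelihood-ratio function tends to `θ ^ (γ+1)` at infinity. -/
lemma mpt_lr_tendsto (h : IsMPT d γ Cd) {θ : ℝ} (hθ : 1 < θ) :
    Tendsto (fun z => d (z / θ) / d z) atTop (𝓝 (θ ^ (γ + 1))) := by
  have hθ0 : (0:ℝ) < θ := lt_trans one_pos hθ
  have h1 : Tendsto (fun z : ℝ => z / θ) atTop atTop :=
    Tendsto.atTop_div_const hθ0 tendsto_id
  have h2 : Tendsto (fun z => d (z / θ) * (z / θ) ^ (γ + 1)) atTop (𝓝 Cd) := h.tail.comp h1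
  have h3 : Tendsto (fun z => θ ^ (γ+1) * ((d (z / θ) * (z / θ) ^ (γ + 1)) /
      (d z * z ^ (γ + 1)))) atTop (𝓝 (θ ^ (γ+1) * (Cd / Cd))) :=
    tendsto_const_nhds.mul (h2.div h.tail h.Cd_pos.ne')
  rw [div_self h.Cd_pos.ne', mul_one] at h3
  refine h3.congr' ?_
  filter_upwards [eventually_gt_atTop 0] with z hz
  have hz0 : (0:ℝ) < z := hz
  have hzθ : (0:ℝ) < z / θ := div_pos hz0 hθ0
  have hdz : d z ≠ 0 := (h.pos z hz0).ne'
  have hdzθpow : (z / θ) ^ (γ + 1) = z ^ (γ+1) / θ ^ (γ+1) := Real.div_rpow hz0.le hθ0.le (γ+1)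
  have hzpow : (0:ℝ) < z ^ (γ+1) := Real.rpow_pos_of_pos hz0 _
  have hθpow : (0:ℝ) < θ ^ (γ+1) := Real.rpow_pos_of_pos hθ0 _
  rw [hdzθpow]
  field_simp

/-- Strict upper bound on the likelihood ratio. -/
lemma mpt_lr_lt (h : IsMPT d γ Cd) {θ : ℝ} (hθ : 1 < θ) {z : ℝ} (hz : 0 < z) :
    d (z / θ) / d z < θ ^ (γ + 1) := by
  have hmono := h.mlr θ hθ
  have hlt : d (z / θ) / d z < d ((z+1) / θ) / d (z+1) :=
    hmono (Set.mem_Ioi.2 hz) (Set.mem_Ioi.2 (by linarith)) (lt_add_one z)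
  refine lt_of_lt_of_le hlt ?_
  refine ge_of_tendsto (mpt_lr_tendsto h hθ) ?_
  filter_upwards [eventually_ge_atTop (z+1)] with w hw
  simpa using hmono.monotoneOn (Set.mem_Ioi.2 (by linarith)) (Set.mem_Ioi.2 (by linarith)) hw

/-- The function `g x = d x * x ^ (γ+1)` is strictly increasing on `(0, ∞)`. -/
lemma mpt_g_strictMono (h : IsMPT d γ Cd) :
    StrictMonoOn (fun x => d x * x ^ (γ + 1)) (Set.Ioi 0) := by
  intro x hx y hy hxy
  have hx0 : (0:ℝ) < x := hx
  have hy0 : (0:ℝ) < y := hy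
  have hθ : 1 < y / x := (one_lt_div hx0).2 hxy
  have key := mpt_lr_lt h hθ hy0
  have hyx : y / (y / x) = x := by field_simp
  rw [hyx] at key
  have hdy : 0 < d y := h.pos y hy0
  have hxpow : (0:ℝ) < x ^ (γ+1) := Real.rpow_pos_of_pos hx0 _
  have key2 : d x < (y/x) ^ (γ+1) * d y := (div_lt_iff₀ hdy).1 key
  have key3 : d x * x ^ (γ+1) < (y/x) ^ (γ+1) * d y * x ^ (γ+1) :=
    mul_lt_mul_of_pos_right key2 hxpow
  have e : (y/x) ^ (γ+1) * d y * x ^ (γ+1) = d y * y ^ (γ+1) := by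
    rw [Real.div_rpow hy0.le hx0.le]
    field_simp
  simpa [e] using key3

/-- Near zero, `g` takes arbitrarily small values (by integrability). -/
lemma mpt_g_small (h : IsMPT d γ Cd) {δ : ℝ} (hδ : 0 < δ) :
    ∃ x : ℝ, 0 < x ∧ d x * x ^ (γ + 1) < δ := by
  by_contra hcon
  push_neg at hcon
  have hmeas : AEStronglyMeasurable (fun x : ℝ => δ * x ^ (-(γ+1)))
      (volume.restrict (Set.Ioo 0 1)) := by
    refine ContinuousOn.aestronglyMeasurable ?_ measurableSet_Ioo
    refine continuousOn_const.mul ?_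
    intro x hx
    exact (Real.continuousAt_rpow_const x _ (Or.inl hx.1.ne')).continuousWithinAt
  have hint : IntegrableOn (fun x : ℝ => δ * x ^ (-(γ+1))) (Set.Ioo 0 1) := by
    refine Integrable.mono h.integrable.integrableOn hmeas ?_
    rw [ae_restrict_iff' measurableSet_Ioo]
    refine Eventually.of_forall fun x hx => ?_
    have hx0 : 0 < x := hx.1
    have hxpow : (0:ℝ) < x ^ (γ+1) := Real.rpow_pos_of_pos hx0 _
    have h1 : δ * x ^ (-(γ+1)) ≤ d x := by
      rw [Real.rpow_neg hx0.le, ← div_eq_mul_inv, div_le_iff₀ hxpow]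
      exact hcon x hx0
    have h2 : (0:ℝ) ≤ δ * x ^ (-(γ+1)) := by positivity
    rw [Real.norm_eq_abs, Real.norm_eq_abs, abs_of_nonneg h2, abs_of_nonneg (h.nonneg x)]
    exact h1
  have hint2 : IntegrableOn (fun x : ℝ => x ^ (-(γ+1))) (Set.Ioo 0 1) := by
    have h2 := hint.const_mul δ⁻¹
    show Integrable (fun x : ℝ => x ^ (-(γ+1))) (volume.restrict (Set.Ioo 0 1))
    simpa [← mul_assoc, inv_mul_cancel₀ hδ.ne'] using h2
  rw [intervalIntegral.integrableOn_Ioo_rpow_iff one_pos] at hint2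
  linarith [h.gamma_pos]

/-- `g` tends to zero along positive sequences tending to zero. -/
lemma mpt_g_tendsto_zero (h : IsMPT d γ Cd) {s : ℕ → ℝ} (hs : ∀ m, 0 < s m)
    (hs0 : Tendsto s atTop (𝓝 0)) :
    Tendsto (fun m => d (s m) * s m ^ (γ + 1)) atTop (𝓝 0) := by
  rw [tendsto_order]
  constructor
  · intro a ha
    refine Eventually.of_forall fun m => lt_of_lt_of_le ha ?_
    have := mul_pos (h.pos _ (hs m)) (Real.rpow_pos_of_pos (hs m) (γ+1))
    exact this.le
  · intro b hb
    obtain ⟨x, hx, hgx⟩ := mpt_g_small h hb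
    filter_upwards [hs0.eventually_lt_const hx] with m hm
    exact lt_trans (mpt_g_strictMono h (Set.mem_Ioi.2 (hs m)) (Set.mem_Ioi.2 hx) hm) hgx

/-- Proposition 2 (threshold part): under the asymptotic framework
`u_m → ∞`, `v_m * u_m ^ (-γ/2) → C₀ = C ^ ((γ+1)/2) * d (√C) / Cd`, any sequence of positive
solutions `ω_m` of the Bayes oracle equation
`(1 + u_m) ^ (-1/2) * d (ω * (1 + u_m) ^ (-1/2)) / d ω = v_m` satisfies
`ω_m ^ 2 / (1 + u_m) → C` and `ω_m ^ 2 / (C * (v_m / C₀) ^ (2/γ)) → 1`. -/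
theorem oracle_threshold_asymptotics (d : ℝ → ℝ) (γ Cd : ℝ) (h : IsMPT d γ Cd)
    (heven : ∀ x, d (-x) = d x) (hcont : ContinuousOn d (Set.Ioi 0))
    (C : ℝ) (hC : 0 < C)
    (u v : ℕ → ℝ) (hu : ∀ m, 0 < u m) (hu' : Tendsto u atTop atTop)
    (hv : ∀ m, 0 < v m)
    (hvu : Tendsto (fun m => v m * u m ^ (-(γ / 2))) atTop
      (nhds (C ^ ((γ + 1) / 2) * d (Real.sqrt C) / Cd)))
    (ω : ℕ → ℝ) (hω : ∀ m, 0 < ω m)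
    (hωeq : ∀ m, (1 + u m) ^ (-(1 : ℝ) / 2) * d (ω m * (1 + u m) ^ (-(1 : ℝ) / 2)) / d (ω m)
      = v m) :
    Tendsto (fun m => ω m ^ 2 / (1 + u m)) atTop (nhds C) ∧
    Tendsto
      (fun m => ω m ^ 2 / (C * (v m / (C ^ ((γ + 1) / 2) * d (Real.sqrt C) / Cd)) ^ (2 / γ)))
      atTop (nhds 1) := by
  have hγ := h.gamma_pos
  have hCd := h.Cd_pos
  set C₀ : ℝ := C ^ ((γ + 1) / 2) * d (Real.sqrt C) / Cd with hC₀def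
  set g : ℝ → ℝ := fun x => d x * x ^ (γ + 1) with hgdef
  have hgmono : StrictMonoOn g (Set.Ioi 0) := mpt_g_strictMono h
  have hsqrtC : 0 < Real.sqrt C := Real.sqrt_pos.2 hC
  -- `g (√C) = C ^ ((γ+1)/2) * d (√C)`
  have hgC : g (Real.sqrt C) = C ^ ((γ + 1) / 2) * d (Real.sqrt C) := by
    have : (Real.sqrt C) ^ (γ + 1) = C ^ ((γ + 1) / 2) := by
      rw [Real.sqrt_eq_rpow, ← Real.rpow_mul hC.le]
      norm_num
      ring_nf
    rw [hgdef]
    simp only [this]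
    ring
  have hC₀ : C₀ = g (Real.sqrt C) / Cd := by rw [hC₀def, hgC]
  have hdC : 0 < d (Real.sqrt C) := h.pos _ hsqrtC
  have hC₀pos : 0 < C₀ := by
    rw [hC₀def]
    positivity
  -- the scaling sequence ε
  set ε : ℕ → ℝ := fun m => (1 + u m) ^ (-(1 : ℝ) / 2) with hεdef
  have h1u : ∀ m, (1:ℝ) < 1 + u m := fun m => by linarith [hu m]
  have h1u0 : ∀ m, (0:ℝ) < 1 + u m := fun m => lt_trans one_pos (h1u m)
  have hεpos : ∀ m, 0 < ε m := fun m => Real.rpow_pos_of_pos (h1u0 m) _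
  have hε0 : Tendsto ε atTop (𝓝 0) := by
    have h1 : Tendsto (fun m => 1 + u m) atTop atTop :=
      tendsto_atTop_add_const_left _ 1 hu'
    have h2 : Tendsto (fun x : ℝ => x ^ (-(1:ℝ)/2)) atTop (𝓝 0) := by
      have := tendsto_rpow_neg_atTop (by norm_num : (0:ℝ) < 1/2)
      simpa [neg_div] using this
    exact h2.comp h1
  have hωeq' : ∀ m, ε m * d (ω m * ε m) / d (ω m) = v m := by
    simp only [hεdef]; exact hωeq
  set t : ℕ → ℝ := fun m => ω m * ε m with htdef
  have htpos : ∀ m, 0 < t m := fun m => mul_pos (hω m) (hεpos m)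
  have hdω : ∀ m, 0 < d (ω m) := fun m => h.pos _ (hω m)
  -- master identity: g (t m) = (v m * ε m ^ γ) * g (ω m)
  have hdt : ∀ m, ε m * d (t m) = v m * d (ω m) := by
    intro m
    have := (div_eq_iff (hdω m).ne').1 (hωeq' m)
    simpa [htdef] using this
  have hεexp : ∀ m, (ω m * ε m) ^ (γ + 1) = ω m ^ (γ + 1) * (ε m ^ γ * ε m) := by
    intro m
    rw [Real.mul_rpow (hω m).le (hεpos m).le, Real.rpow_add_one (hεpos m).ne' γ]
  have hgeq : ∀ m, g (t m) = (v m * ε m ^ γ) * g (ω m) := by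
    intro m
    simp only [hgdef, htdef]
    rw [hεexp m]
    have := hdt m
    simp only [htdef] at this
    linear_combination (ω m ^ (γ + 1) * ε m ^ γ) * this
  -- v m * ε m ^ γ → C₀
  have hεγ : ∀ m, ε m ^ γ = (1 + u m) ^ (-(γ / 2)) := by
    intro m
    rw [hεdef, ← Real.rpow_mul (h1u0 m).le]
    congr 1
    ring
  have hveps : Tendsto (fun m => v m * ε m ^ γ) atTop (𝓝 C₀) := by
    have ha : Tendsto (fun m => u m / (1 + u m)) atTop (𝓝 1) := by
      have h1 : Tendsto (fun m => 1 + u m) atTop atTop :=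
        tendsto_atTop_add_const_left _ 1 hu'
      have h2 : Tendsto (fun m => 1 - (1 + u m)⁻¹) atTop (𝓝 1) := by
        have h3 := ((tendsto_const_nhds : Tendsto (fun _ : ℕ => (1:ℝ)) atTop (𝓝 1)).sub
          h1.inv_tendsto_atTop)
        simpa using h3
      refine h2.congr fun m => ?_
      field_simp [(h1u0 m).ne']
      ring
    have hb : Tendsto (fun m => (u m / (1 + u m)) ^ (γ / 2)) atTop (𝓝 ((1:ℝ) ^ (γ / 2))) :=
      ha.rpow tendsto_const_nhds (Or.inl one_ne_zero)
    rw [Real.one_rpow] at hb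
    have hmul := hvu.mul hb
    rw [mul_one] at hmul
    refine hmul.congr fun m => ?_
    rw [hεγ m, Real.div_rpow (hu m).le (h1u0 m).le, Real.rpow_neg (h1u0 m).le,
      Real.rpow_neg (hu m).le]
    have hupow : (0:ℝ) < u m ^ (γ / 2) := Real.rpow_pos_of_pos (hu m) _
    have h1upow : (0:ℝ) < (1 + u m) ^ (γ / 2) := Real.rpow_pos_of_pos (h1u0 m) _
    field_simp
  -- ω → ∞
  have hθ1 : ∀ m, 1 < (1 + u m) ^ ((1:ℝ)/2) :=
    fun m => (Real.one_lt_rpow_iff_of_pos (h1u0 m)).2 (Or.inl ⟨h1u m, by norm_num⟩)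
  have hθinv : ∀ m, ((1 + u m) ^ ((1:ℝ)/2))⁻¹ = ε m := by
    intro m
    rw [hεdef, ← Real.rpow_neg (h1u0 m).le]
    norm_num [neg_div]
  have hωtop : Tendsto ω atTop atTop := by
    rw [tendsto_atTop]
    intro K
    set K' : ℝ := max K 1 with hK'def
    have hK' : 0 < K' := lt_of_lt_of_le one_pos (le_max_right _ _)
    have hgK' : 0 < g K' := mul_pos (h.pos _ hK') (Real.rpow_pos_of_pos hK' _)
    have hA : Tendsto (fun m => g (K' * ε m)) atTop (𝓝 0) :=
      mpt_g_tendsto_zero h (fun m => mul_pos hK' (hεpos m))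
        (by simpa using hε0.const_mul K')
    have hB : Tendsto (fun m => v m * ε m ^ γ * g K') atTop (𝓝 (C₀ * g K')) :=
      hveps.mul_const _
    have hev : ∀ᶠ m in atTop, g (K' * ε m) < v m * ε m ^ γ * g K' :=
      hA.eventually_lt hB (mul_pos hC₀pos hgK')
    filter_upwards [hev] with m hm
    refine le_of_lt (lt_of_le_of_lt (le_max_left K 1) ?_)
    by_contra hcon
    push_neg at hcon
    -- then by MLR monotonicity v/ε ≤ d(K'ε)/d K', contradicting hm
    have hmono := (h.mlr _ (hθ1 m)).monotoneOn (Set.mem_Ioi.2 (hω m))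
      (Set.mem_Ioi.2 hK') hcon
    simp only [div_eq_mul_inv (ω m), div_eq_mul_inv K', hθinv m] at hmono
    -- hmono : d (ω m * ε m) / d (ω m) ≤ d (K' * ε m) / d K'
    have hvε : v m * d (ω m) = ε m * d (ω m * ε m) := (hdt m).symm
    have hdK' : 0 < d K' := h.pos _ hK'
    have hineq : v m * d K' ≤ d (K' * ε m) * ε m := by
      have h1 : d (ω m * ε m) / d (ω m) ≤ d (K' * ε m) / d K' := hmono
      have h2 : v m / ε m ≤ d (K' * ε m) / d K' := by
        have : v m / ε m = d (ω m * ε m) / d (ω m) := by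
          rw [div_eq_div_iff (hεpos m).ne' (hdω m).ne']
          linarith [hvε]
        rw [this]; exact h1
      rw [div_le_div_iff₀ (hεpos m) hdK'] at h2
      exact h2
    have hK'exp : (K' * ε m) ^ (γ + 1) = K' ^ (γ + 1) * (ε m ^ γ * ε m) := by
      rw [Real.mul_rpow hK'.le (hεpos m).le, Real.rpow_add_one (hεpos m).ne' γ]
    have hfin : v m * ε m ^ γ * g K' ≤ g (K' * ε m) := by
      simp only [hgdef]
      rw [hK'exp]
      have hthis : v m * d K' * (ε m ^ γ * K' ^ (γ + 1))
          ≤ d (K' * ε m) * ε m * (ε m ^ γ * K' ^ (γ + 1)) :=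
        mul_le_mul_of_nonneg_right hineq
          (mul_nonneg (Real.rpow_nonneg (hεpos m).le γ) (Real.rpow_nonneg hK'.le (γ + 1)))
      nlinarith [hthis]
    exact absurd hfin (not_le.2 hm)
  -- g (t m) → g (√C)
  have hgω : Tendsto (fun m => g (ω m)) atTop (𝓝 Cd) := h.tail.comp hωtop
  have htg : Tendsto (fun m => g (t m)) atTop (𝓝 (g (Real.sqrt C))) := by
    have := hveps.mul hgω
    have hlim : C₀ * Cd = g (Real.sqrt C) := by
      rw [hC₀, div_mul_cancel₀ _ hCd.ne']
    rw [hlim] at this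
    exact this.congr fun m => (hgeq m).symm
  -- t m → √C
  have httend : Tendsto t atTop (𝓝 (Real.sqrt C)) := by
    rw [tendsto_order]
    constructor
    · intro a ha
      rcases le_or_gt a 0 with h0 | h0
      · exact Eventually.of_forall fun m => lt_of_le_of_lt h0 (htpos m)
      · have hga : g a < g (Real.sqrt C) :=
          hgmono (Set.mem_Ioi.2 h0) (Set.mem_Ioi.2 hsqrtC) ha
        filter_upwards [htg.eventually_const_lt hga] with m hm
        by_contra hc
        push_neg at hc
        exact absurd (hgmono.monotoneOn (Set.mem_Ioi.2 (htpos m))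
          (Set.mem_Ioi.2 h0) hc) (not_le.2 hm)
    · intro b hb
      have hb0 : 0 < b := lt_trans hsqrtC hb
      have hgb : g (Real.sqrt C) < g b :=
        hgmono (Set.mem_Ioi.2 hsqrtC) (Set.mem_Ioi.2 hb0) hb
      filter_upwards [htg.eventually_lt_const hgb] with m hm
      by_contra hc
      push_neg at hc
      exact absurd (hgmono.monotoneOn (Set.mem_Ioi.2 hb0)
        (Set.mem_Ioi.2 (htpos m)) hc) (not_le.2 hm)
  -- t m ^ 2 → C
  have hsq : Tendsto (fun m => t m ^ 2) atTop (𝓝 C) := by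
    have := httend.mul httend
    rw [Real.mul_self_sqrt hC.le] at this
    exact this.congr fun m => (sq (t m)).symm
  -- ε m ^ 2 = (1 + u m)⁻¹
  have hε2 : ∀ m, ε m ^ 2 = (1 + u m)⁻¹ := by
    intro m
    rw [hεdef, ← Real.rpow_natCast ((1 + u m) ^ (-(1:ℝ)/2)) 2, ← Real.rpow_mul (h1u0 m).le,
      ← Real.rpow_neg_one (1 + u m)]
    norm_num
  have heq1 : ∀ m, ω m ^ 2 / (1 + u m) = t m ^ 2 := by
    intro m
    rw [htdef]
    simp only [mul_pow, hε2 m]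
    rw [div_eq_mul_inv]
  have conc1 : Tendsto (fun m => ω m ^ 2 / (1 + u m)) atTop (𝓝 C) :=
    hsq.congr fun m => (heq1 m).symm
  refine ⟨conc1, ?_⟩
  -- second conclusion
  have hratio : Tendsto (fun m => v m * ε m ^ γ / C₀) atTop (𝓝 1) := by
    have := hveps.div_const C₀
    rwa [div_self hC₀pos.ne'] at this
  have hr2 : Tendsto (fun m => (v m * ε m ^ γ / C₀) ^ (2 / γ)) atTop (𝓝 ((1:ℝ) ^ (2 / γ))) :=
    hratio.rpow tendsto_const_nhds (Or.inl one_ne_zero)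
  rw [Real.one_rpow] at hr2
  have hden : Tendsto (fun m => C * (v m * ε m ^ γ / C₀) ^ (2 / γ)) atTop (𝓝 C) := by
    have := tendsto_const_nhds.mul hr2 (α := ℕ) (f := fun _ => C)
    simpa using this
  have hfinal : Tendsto (fun m => t m ^ 2 / (C * (v m * ε m ^ γ / C₀) ^ (2 / γ)))
      atTop (𝓝 1) := by
    have := hsq.div hden hC.ne'
    rwa [div_self hC.ne'] at this
  refine hfinal.congr fun m => ?_
  -- pointwise identity
  have hεγpos : 0 < ε m ^ γ := Real.rpow_pos_of_pos (hεpos m) _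
  have e5 : (v m / C₀) ^ (2 / γ) = (v m * ε m ^ γ / C₀) ^ (2 / γ) * (ε m ^ 2)⁻¹ := by
    have hid : v m / C₀ = (v m * ε m ^ γ / C₀) * (ε m ^ γ)⁻¹ := by
      field_simp
    have hvC : (0:ℝ) ≤ v m * ε m ^ γ / C₀ :=
      (div_pos (mul_pos (hv m) hεγpos) hC₀pos).le
    rw [hid, Real.mul_rpow hvC (inv_nonneg.2 hεγpos.le),
      Real.inv_rpow hεγpos.le, ← Real.rpow_natCast (ε m) 2,
      ← Real.rpow_mul (hεpos m).le]
    have : γ * (2 / γ) = (2:ℕ) := by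
      field_simp
      norm_num
    rw [this]
  have ht2 : t m ^ 2 = ω m ^ 2 * ε m ^ 2 := by rw [htdef]; ring
  rw [e5, ht2]
  have hX : 0 < (v m * ε m ^ γ / C₀) ^ (2 / γ) :=
    Real.rpow_pos_of_pos (div_pos (mul_pos (hv m) hεγpos) hC₀pos) _
  field_simp
end

section
/- Under the asymptotic framework, if ω_m is a sequence of positive solutions of the Bayes oracle equation (1+u_m)^(−1/2)·d(ω·(1+u_m)^(−1/2))/d(ω) = v_m, then the type I risk component satisfies v_m·2(1 − D(ω_m)) → C_1 = 2√C·d(√C)/γ as m → ∞. -/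
open MeasureTheory Filter

lemma lt_of_strictMonoOn_tendsto {g : ℝ → ℝ} {L : ℝ}
    (hm : StrictMonoOn g (Set.Ioi 0)) (hl : Tendsto g atTop (nhds L)) {x : ℝ} (hx : 0 < x) :
    g x < L := by
  have h1 : g x < g (x + 1) := hm (Set.mem_Ioi.2 hx) (Set.mem_Ioi.2 (by linarith)) (by linarith)
  have h2 : g (x + 1) ≤ L := by
    refine ge_of_tendsto hl ?_
    filter_upwards [eventually_ge_atTop (x + 1)] with t ht
    exact hm.monotoneOn (Set.mem_Ioi.2 (by linarith)) (Set.mem_Ioi.2 (by linarith)) ht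
  linarith

lemma mpt_ratio_tendsto {d : ℝ → ℝ} {γ Cd : ℝ} (h : IsMPT d γ Cd) {θ : ℝ} (hθ : 1 < θ) :
    Tendsto (fun x => d (x / θ) / d x) atTop (nhds (θ ^ (γ + 1))) := by
  have hθ0 : (0:ℝ) < θ := lt_trans one_pos hθ
  have h1 : Tendsto (fun x : ℝ => d (x / θ) * (x / θ) ^ (γ + 1)) atTop (nhds Cd) :=
    h.tail.comp (tendsto_id.atTop_div_const hθ0)
  have h2 := (h1.div h.tail (ne_of_gt h.Cd_pos)).mul_const (θ ^ (γ + 1))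
  rw [div_self (ne_of_gt h.Cd_pos), one_mul] at h2
  refine h2.congr' ?_
  filter_upwards [eventually_gt_atTop 0] with x hx
  have hd : d x ≠ 0 := ne_of_gt (h.pos x hx)
  have hxp : x ^ (γ + 1) ≠ 0 := ne_of_gt (Real.rpow_pos_of_pos hx _)
  have hθp : θ ^ (γ + 1) ≠ 0 := ne_of_gt (Real.rpow_pos_of_pos hθ0 _)
  simp only [Pi.div_apply]
  rw [Real.div_rpow hx.le hθ0.le]
  field_simp

lemma mpt_f_strictMono {d : ℝ → ℝ} {γ Cd : ℝ} (h : IsMPT d γ Cd) :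
    StrictMonoOn (fun x => d x * x ^ (γ + 1)) (Set.Ioi 0) := by
  intro a ha b hb hab
  simp only [Set.mem_Ioi] at ha hb
  have hθ : 1 < b / a := (one_lt_div ha).2 hab
  have key : d (b / (b / a)) / d b < (b / a) ^ (γ + 1) :=
    lt_of_strictMonoOn_tendsto (h.mlr _ hθ) (mpt_ratio_tendsto h hθ) hb
  have hba : b / (b / a) = a := by
    field_simp
  rw [hba, div_lt_iff₀ (h.pos b hb)] at key
  have h2 : d a * a ^ (γ + 1) < (b / a) ^ (γ + 1) * d b * a ^ (γ + 1) :=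
    mul_lt_mul_of_pos_right key (Real.rpow_pos_of_pos ha _)
  have h3 : (b / a) ^ (γ + 1) * d b * a ^ (γ + 1) = d b * b ^ (γ + 1) := by
    rw [Real.div_rpow hb.le ha.le]
    have : a ^ (γ + 1) ≠ 0 := ne_of_gt (Real.rpow_pos_of_pos ha _)
    field_simp
  simpa [h3] using h2

lemma mpt_tail_integral {d : ℝ → ℝ} {γ Cd : ℝ} (h : IsMPT d γ Cd) :
    Tendsto (fun x => (∫ t in Set.Ioi x, d t) * x ^ γ) atTop (nhds (Cd / γ)) := by
  have hγ := h.gamma_pos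
  rw [Metric.tendsto_atTop]
  intro ε hε
  set δ := γ * ε / 2 with hδdef
  have hδ : 0 < δ := by positivity
  obtain ⟨M, hM⟩ := (Metric.tendsto_atTop.1 h.tail) δ hδ
  refine ⟨max M 1, fun x hx => ?_⟩
  have hx1 : (1:ℝ) ≤ x := le_trans (le_max_right _ _) hx
  have hxM : M ≤ x := le_trans (le_max_left _ _) hx
  have hx0 : (0:ℝ) < x := lt_of_lt_of_le one_pos hx1
  have hexp : -(γ + 1) < -1 := by linarith
  have hInt1 : IntegrableOn d (Set.Ioi x) := h.integrable.integrableOn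
  have hInt2 : IntegrableOn (fun t : ℝ => t ^ (-(γ + 1))) (Set.Ioi x) :=
    integrableOn_Ioi_rpow_of_lt hexp hx0
  have hval : ∫ t in Set.Ioi x, t ^ (-(γ + 1)) = x ^ (-γ) / γ := by
    rw [integral_Ioi_rpow_of_lt hexp hx0, show -(γ + 1) + 1 = -γ by ring, neg_div_neg_eq]
  have hbnd : ∀ t ∈ Set.Ioi x, Cd - δ < d t * t ^ (γ + 1) ∧ d t * t ^ (γ + 1) < Cd + δ := by
    intro t ht
    have ht' : M ≤ t := le_trans hxM (le_of_lt ht)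
    have := hM t ht'
    rw [Real.dist_eq, abs_lt] at this
    constructor <;> linarith [this.1, this.2]
  have hub : (∫ t in Set.Ioi x, d t) ≤ (Cd + δ) * (x ^ (-γ) / γ) := by
    have hmono : (∫ t in Set.Ioi x, d t) ≤ ∫ t in Set.Ioi x, (Cd + δ) * t ^ (-(γ + 1)) := by
      refine setIntegral_mono_on hInt1 (hInt2.const_mul _) measurableSet_Ioi ?_
      intro t ht
      have ht0 : (0:ℝ) < t := lt_trans hx0 ht
      have h1 := (hbnd t ht).2
      have h2 : t ^ (-(γ + 1)) = (t ^ (γ + 1))⁻¹ := Real.rpow_neg ht0.le _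
      have h3 : (0:ℝ) < t ^ (γ + 1) := Real.rpow_pos_of_pos ht0 _
      rw [h2]
      calc d t = d t * t ^ (γ + 1) * (t ^ (γ + 1))⁻¹ := by field_simp
        _ ≤ (Cd + δ) * (t ^ (γ + 1))⁻¹ := by
            apply mul_le_mul_of_nonneg_right h1.le (by positivity)
    calc (∫ t in Set.Ioi x, d t) ≤ ∫ t in Set.Ioi x, (Cd + δ) * t ^ (-(γ + 1)) := hmono
      _ = (Cd + δ) * (x ^ (-γ) / γ) := by rw [MeasureTheory.integral_const_mul, hval]
  have hlb : (Cd - δ) * (x ^ (-γ) / γ) ≤ ∫ t in Set.Ioi x, d t := by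
    have hmono : (∫ t in Set.Ioi x, (Cd - δ) * t ^ (-(γ + 1))) ≤ ∫ t in Set.Ioi x, d t := by
      refine setIntegral_mono_on (hInt2.const_mul _) hInt1 measurableSet_Ioi ?_
      intro t ht
      have ht0 : (0:ℝ) < t := lt_trans hx0 ht
      have h1 := (hbnd t ht).1
      have h3 : (0:ℝ) < t ^ (γ + 1) := Real.rpow_pos_of_pos ht0 _
      have h2 : t ^ (-(γ + 1)) = (t ^ (γ + 1))⁻¹ := Real.rpow_neg ht0.le _
      rw [h2]
      calc (Cd - δ) * (t ^ (γ + 1))⁻¹ ≤ d t * t ^ (γ + 1) * (t ^ (γ + 1))⁻¹ :=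
            mul_le_mul_of_nonneg_right h1.le (by positivity)
        _ = d t := by field_simp
    calc (Cd - δ) * (x ^ (-γ) / γ) = ∫ t in Set.Ioi x, (Cd - δ) * t ^ (-(γ + 1)) := by
          rw [MeasureTheory.integral_const_mul, hval]
      _ ≤ ∫ t in Set.Ioi x, d t := hmono
  have hxγ : (0:ℝ) < x ^ γ := Real.rpow_pos_of_pos hx0 _
  have e1 : x ^ (-γ) / γ * x ^ γ = 1 / γ := by
    rw [Real.rpow_neg hx0.le]
    field_simp
  have hub2 : (∫ t in Set.Ioi x, d t) * x ^ γ ≤ (Cd + δ) * (1 / γ) := by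
    calc (∫ t in Set.Ioi x, d t) * x ^ γ ≤ (Cd + δ) * (x ^ (-γ) / γ) * x ^ γ :=
          mul_le_mul_of_nonneg_right hub hxγ.le
      _ = (Cd + δ) * (1 / γ) := by rw [mul_assoc, e1]
  have hlb2 : (Cd - δ) * (1 / γ) ≤ (∫ t in Set.Ioi x, d t) * x ^ γ := by
    calc (Cd - δ) * (1 / γ) = (Cd - δ) * (x ^ (-γ) / γ) * x ^ γ := by rw [mul_assoc, e1]
      _ ≤ (∫ t in Set.Ioi x, d t) * x ^ γ := mul_le_mul_of_nonneg_right hlb hxγ.le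
  rw [Real.dist_eq, abs_lt]
  have hδγ : δ * (1 / γ) = ε / 2 := by rw [hδdef]; field_simp
  have hCdγ : Cd / γ = Cd * (1 / γ) := by ring
  constructor <;> nlinarith [hub2, hlb2]

/-- Proposition 2 (type I risk component): under the asymptotic framework, if `ω_m` solves the
Bayes oracle equation, then `v_m * 2 * (1 - D ω_m) → C₁ = 2 * √C * d (√C) / γ`. -/
theorem oracle_typeI_risk (d : ℝ → ℝ) (γ Cd : ℝ) (h : IsMPT d γ Cd)
    (heven : ∀ x, d (-x) = d x) (hcont : ContinuousOn d (Set.Ioi 0))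
    (C : ℝ) (hC : 0 < C)
    (u v : ℕ → ℝ) (hu : ∀ m, 0 < u m) (hu' : Tendsto u atTop atTop)
    (hv : ∀ m, 0 < v m)
    (hvu : Tendsto (fun m => v m * u m ^ (-(γ / 2))) atTop
      (nhds (C ^ ((γ + 1) / 2) * d (Real.sqrt C) / Cd)))
    (ω : ℕ → ℝ) (hω : ∀ m, 0 < ω m)
    (hωeq : ∀ m, (1 + u m) ^ (-(1 : ℝ) / 2) * d (ω m * (1 + u m) ^ (-(1 : ℝ) / 2)) / d (ω m)
      = v m) :
    Tendsto (fun m => v m * (2 * (1 - cdf d (ω m)))) atTop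
      (nhds (2 * Real.sqrt C * d (Real.sqrt C) / γ)) := by
  have hγ := h.gamma_pos
  have hCd := h.Cd_pos
  set f : ℝ → ℝ := fun x => d x * x ^ (γ + 1) with hf
  have hfpos : ∀ x : ℝ, 0 < x → 0 < f x := fun x hx =>
    mul_pos (h.pos x hx) (Real.rpow_pos_of_pos hx _)
  have hfmono : StrictMonoOn f (Set.Ioi 0) := mpt_f_strictMono h
  have hfmonoOn : MonotoneOn f (Set.Ioi 0) := hfmono.monotoneOn
  have h1u : ∀ m, (0:ℝ) < 1 + u m := fun m => by linarith [hu m]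
  set s : ℕ → ℝ := fun m => (1 + u m) ^ (-(1 : ℝ) / 2) with hs
  have hspos : ∀ m, 0 < s m := fun m => Real.rpow_pos_of_pos (h1u m) _
  have hlampos : ∀ m, 0 < ω m * s m := fun m => mul_pos (hω m) (hspos m)
  -- key identity
  have hkey : ∀ m, f (ω m * s m) = v m * s m ^ γ * f (ω m) := by
    intro m
    have he := hωeq m
    have hsm : s m = (1 + u m) ^ (-(1 : ℝ) / 2) := rfl
    rw [← hsm] at he
    have hd : d (ω m) ≠ 0 := ne_of_gt (h.pos _ (hω m))
    have hs0 : s m ≠ 0 := ne_of_gt (hspos m)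
    have hX : d (ω m * s m) = v m * d (ω m) / s m := by
      rw [div_eq_iff hd] at he
      field_simp
      linarith [he]
    show d (ω m * s m) * (ω m * s m) ^ (γ + 1) = v m * s m ^ γ * (d (ω m) * ω m ^ (γ + 1))
    rw [hX, Real.mul_rpow (hω m).le (hspos m).le,
      Real.rpow_add (hspos m) γ 1, Real.rpow_one]
    field_simp
  -- limit of v * s^γ
  set ρ : ℝ := C ^ ((γ + 1) / 2) * d (Real.sqrt C) / Cd with hρ
  have hsC : (0:ℝ) < Real.sqrt C := Real.sqrt_pos.2 hC
  have hρpos : 0 < ρ := div_pos (mul_pos (Real.rpow_pos_of_pos hC _) (h.pos _ hsC)) hCd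
  have hvs : Tendsto (fun m => v m * s m ^ γ) atTop (nhds ρ) := by
    have hq1 : Tendsto (fun m => u m / (1 + u m)) atTop (nhds 1) := by
      have he : ∀ m, u m / (1 + u m) = 1 - (1 + u m)⁻¹ := by
        intro m
        rw [inv_eq_one_div, eq_sub_iff_add_eq, ← add_div, add_comm,
          div_self (ne_of_gt (h1u m))]
      have h0 : Tendsto (fun m => (1 + u m)⁻¹) atTop (nhds 0) :=
        tendsto_inv_atTop_zero.comp (tendsto_atTop_add_const_left _ 1 hu')
      have h1 := (tendsto_const_nhds (x := (1:ℝ))).sub h0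
      rw [sub_zero] at h1
      exact Tendsto.congr (fun m => (he m).symm) h1
    have hq2 : Tendsto (fun m => (u m / (1 + u m)) ^ (γ / 2)) atTop (nhds 1) := by
      have hc : ContinuousAt (fun x : ℝ => x ^ (γ / 2)) 1 :=
        Real.continuousAt_rpow_const 1 (γ / 2) (Or.inl one_ne_zero)
      have := hc.tendsto.comp hq1
      rwa [Real.one_rpow] at this
    have hmul := hvu.mul hq2
    rw [mul_one] at hmul
    refine Tendsto.congr (fun m => ?_) hmul
    have hsm : s m ^ γ = (1 + u m) ^ (-(γ / 2)) := by
      show ((1 + u m) ^ (-(1 : ℝ) / 2)) ^ γ = _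
      rw [← Real.rpow_mul (h1u m).le]
      congr 1
      ring
    rw [hsm, Real.div_rpow (hu m).le (h1u m).le, Real.rpow_neg (hu m).le,
      Real.rpow_neg (h1u m).le]
    have hu0 : u m ^ (γ / 2) ≠ 0 := ne_of_gt (Real.rpow_pos_of_pos (hu m) _)
    have h1u0 : (1 + u m) ^ (γ / 2) ≠ 0 := ne_of_gt (Real.rpow_pos_of_pos (h1u m) _)
    field_simp
  -- step and iteration lemmas for the lower-boundedness argument
  have hstep : ∀ B : ℝ, 0 < B → ∀ y : ℝ, 0 < y → y ≤ B →
      f (y / 2) ≤ f (B / 2) / f B * f y := by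
    intro B hB y hy hyB
    have hrmono : MonotoneOn (fun x => d (x / 2) / d x) (Set.Ioi 0) :=
      (h.mlr 2 one_lt_two).monotoneOn
    have hr : d (y / 2) / d y ≤ d (B / 2) / d B :=
      hrmono (Set.mem_Ioi.2 hy) (Set.mem_Ioi.2 hB) hyB
    rw [div_le_div_iff₀ (h.pos y hy) (h.pos B hB)] at hr
    rw [div_mul_eq_mul_div, le_div_iff₀ (hfpos B hB)]
    show d (y / 2) * (y / 2) ^ (γ + 1) * (d B * B ^ (γ + 1)) ≤
      d (B / 2) * (B / 2) ^ (γ + 1) * (d y * y ^ (γ + 1))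
    rw [Real.div_rpow hy.le (by norm_num : (0:ℝ) ≤ 2),
      Real.div_rpow hB.le (by norm_num : (0:ℝ) ≤ 2)]
    have h2p : (0:ℝ) < (2:ℝ) ^ (γ + 1) := Real.rpow_pos_of_pos two_pos _
    have hyp : (0:ℝ) ≤ y ^ (γ + 1) := (Real.rpow_pos_of_pos hy _).le
    have hBp : (0:ℝ) ≤ B ^ (γ + 1) := (Real.rpow_pos_of_pos hB _).le
    have := mul_le_mul_of_nonneg_right hr
      (by positivity : (0:ℝ) ≤ y ^ (γ + 1) * B ^ (γ + 1) / 2 ^ (γ + 1))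
    calc d (y / 2) * (y ^ (γ + 1) / 2 ^ (γ + 1)) * (d B * B ^ (γ + 1))
        = d (y / 2) * d B * (y ^ (γ + 1) * B ^ (γ + 1) / 2 ^ (γ + 1)) := by ring
      _ ≤ d (B / 2) * d y * (y ^ (γ + 1) * B ^ (γ + 1) / 2 ^ (γ + 1)) := this
      _ = d (B / 2) * (B ^ (γ + 1) / 2 ^ (γ + 1)) * (d y * y ^ (γ + 1)) := by ring
  have hiter : ∀ B : ℝ, 0 < B → ∀ n : ℕ, ∀ y : ℝ, 0 < y → y ≤ B →
      f (y / 2 ^ n) ≤ (f (B / 2) / f B) ^ n * f y := by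
    intro B hB n
    induction n with
    | zero => intro y hy hyB; simp
    | succ k ih =>
      intro y hy hyB
      have hq0 : (0:ℝ) ≤ f (B / 2) / f B :=
        (div_pos (hfpos _ (by linarith)) (hfpos _ hB)).le
      have h2k : (0:ℝ) < (2:ℝ) ^ k := by positivity
      have h1 : y / 2 ^ (k + 1) = y / 2 ^ k / 2 := by
        rw [div_div, pow_succ]
      have h2 : (0:ℝ) < y / 2 ^ k := by positivity
      have h3 : y / 2 ^ k ≤ B :=
        le_trans (div_le_self hy.le (one_le_pow₀ (by norm_num))) hyB
      calc f (y / 2 ^ (k + 1)) = f (y / 2 ^ k / 2) := by rw [h1]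
        _ ≤ f (B / 2) / f B * f (y / 2 ^ k) := hstep B hB _ h2 h3
        _ ≤ f (B / 2) / f B * ((f (B / 2) / f B) ^ k * f y) :=
            mul_le_mul_of_nonneg_left (ih y hy hyB) hq0
        _ = (f (B / 2) / f B) ^ (k + 1) * f y := by ring
  -- θ and the dyadic exponents
  set θ : ℕ → ℝ := fun m => (1 + u m) ^ ((1 : ℝ) / 2) with hθdef
  have hθ1 : ∀ m, (1:ℝ) ≤ θ m := by
    intro m
    have := Real.rpow_le_rpow (by norm_num : (0:ℝ) ≤ 1)
      (by linarith [hu m] : (1:ℝ) ≤ 1 + u m) (by norm_num : (0:ℝ) ≤ (1:ℝ)/2)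
    rwa [Real.one_rpow] at this
  have hθs : ∀ m, s m = (θ m)⁻¹ := by
    intro m
    show (1 + u m) ^ (-(1 : ℝ) / 2) = ((1 + u m) ^ ((1 : ℝ) / 2))⁻¹
    rw [← Real.rpow_neg (h1u m).le]
    congr 1
    ring
  have hθtop : Tendsto θ atTop atTop :=
    (tendsto_rpow_atTop (by norm_num : (0:ℝ) < 1/2)).comp
      (tendsto_atTop_add_const_left _ 1 hu')
  set nn : ℕ → ℕ := fun m => Nat.log 2 ⌊θ m⌋₊ with hnn
  have h2n : ∀ m, (2:ℝ) ^ (nn m) ≤ θ m := by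
    intro m
    have hfl : 1 ≤ ⌊θ m⌋₊ := Nat.one_le_iff_ne_zero.2 (by
      have := Nat.floor_pos.mpr (hθ1 m)
      omega)
    have h2 : 2 ^ (nn m) ≤ ⌊θ m⌋₊ := Nat.pow_log_le_self 2 (by omega)
    calc (2:ℝ) ^ (nn m) = ((2 ^ (nn m) : ℕ) : ℝ) := by push_cast; ring
      _ ≤ (⌊θ m⌋₊ : ℝ) := Nat.cast_le.2 h2
      _ ≤ θ m := Nat.floor_le (le_trans zero_le_one (hθ1 m))
  have hntop : Tendsto nn atTop atTop := by
    rw [tendsto_atTop]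
    intro K
    filter_upwards [hθtop.eventually_ge_atTop ((2:ℝ) ^ K)] with m hm
    have hfl : (2:ℕ) ^ K ≤ ⌊θ m⌋₊ := Nat.le_floor (by push_cast; exact hm)
    calc K = Nat.log 2 (2 ^ K) := (Nat.log_pow (by norm_num) K).symm
      _ ≤ nn m := Nat.log_mono_right hfl
  -- ω tends to infinity
  have hωtop : Tendsto ω atTop atTop := by
    rw [tendsto_atTop]
    intro b
    set B : ℝ := max b 1 with hBdef
    have hB : (0:ℝ) < B := lt_of_lt_of_le one_pos (le_max_right _ _)
    set q : ℝ := f (B / 2) / f B with hqdef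
    have hq0 : 0 ≤ q := (div_pos (hfpos _ (by linarith)) (hfpos _ hB)).le
    have hq1 : q < 1 := by
      rw [hqdef, div_lt_one (hfpos _ hB)]
      exact hfmono (Set.mem_Ioi.2 (by linarith)) (Set.mem_Ioi.2 hB) (by linarith)
    have hqn : Tendsto (fun m => q ^ nn m) atTop (nhds 0) :=
      (tendsto_pow_atTop_nhds_zero_of_lt_one hq0 hq1).comp hntop
    filter_upwards [hvs.eventually (lt_mem_nhds (by linarith : ρ / 2 < ρ)),
      hqn.eventually (gt_mem_nhds (by linarith : (0:ℝ) < ρ / 2))] with m h1 h2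
    by_contra hcon
    push_neg at hcon
    have hωB : ω m ≤ B := le_trans hcon.le (le_max_left _ _)
    have hsle : s m ≤ ((2:ℝ) ^ (nn m))⁻¹ := by
      rw [hθs m]
      exact inv_anti₀ (by positivity) (h2n m)
    have hlamle : ω m * s m ≤ ω m / 2 ^ (nn m) := by
      rw [div_eq_mul_inv]
      exact mul_le_mul_of_nonneg_left hsle (hω m).le
    have hfle : f (ω m * s m) ≤ q ^ nn m * f (ω m) := by
      refine le_trans (hfmonoOn (Set.mem_Ioi.2 (hlampos m))
        (Set.mem_Ioi.2 (div_pos (hω m) (by positivity))) hlamle) ?_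
      exact hiter B hB (nn m) (ω m) (hω m) hωB
    rw [hkey m] at hfle
    have hfω : 0 < f (ω m) := hfpos _ (hω m)
    have : v m * s m ^ γ ≤ q ^ nn m := by
      have := (mul_le_mul_iff_of_pos_right hfω).1 hfle
      exact this
    linarith
  -- λ tends to √C
  have hftop : Tendsto (fun m => f (ω m)) atTop (nhds Cd) := h.tail.comp hωtop
  have hfC : f (Real.sqrt C) = ρ * Cd := by
    have h1 : (Real.sqrt C) ^ (γ + 1) = C ^ ((γ + 1) / 2) := by
      rw [Real.sqrt_eq_rpow, ← Real.rpow_mul hC.le]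
      congr 1
      ring
    show d (Real.sqrt C) * (Real.sqrt C) ^ (γ + 1) = ρ * Cd
    rw [h1, hρ]
    field_simp
  have hflam : Tendsto (fun m => f (ω m * s m)) atTop (nhds (f (Real.sqrt C))) := by
    have := hvs.mul hftop
    rw [← hfC] at this
    exact Tendsto.congr (fun m => (hkey m).symm) this
  have hlamC : Tendsto (fun m => ω m * s m) atTop (nhds (Real.sqrt C)) := by
    rw [tendsto_order]
    constructor
    · intro a ha
      rcases le_or_gt a 0 with ha0 | ha0
      · exact Eventually.of_forall fun m => lt_of_le_of_lt ha0 (hlampos m)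
      · have hfa : f a < f (Real.sqrt C) := hfmono (Set.mem_Ioi.2 ha0) (Set.mem_Ioi.2 hsC) ha
        filter_upwards [hflam.eventually (lt_mem_nhds hfa)] with m hm
        by_contra hle
        push_neg at hle
        exact absurd (hfmonoOn (Set.mem_Ioi.2 (hlampos m)) (Set.mem_Ioi.2 ha0) hle)
          (not_le.2 hm)
    · intro b hb
      have hb0 : 0 < b := lt_trans hsC hb
      have hfb : f (Real.sqrt C) < f b := hfmono (Set.mem_Ioi.2 hsC) (Set.mem_Ioi.2 hb0) hb
      filter_upwards [hflam.eventually (gt_mem_nhds hfb)] with m hm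
      by_contra hle
      push_neg at hle
      exact absurd (hfmonoOn (Set.mem_Ioi.2 hb0) (Set.mem_Ioi.2 (hlampos m)) hle)
        (not_le.2 hm)
  -- assemble the final limit
  have htail := (mpt_tail_integral h).comp hωtop
  have hlamγ : Tendsto (fun m => (ω m * s m) ^ (-γ)) atTop
      (nhds ((Real.sqrt C) ^ (-γ))) :=
    ((Real.continuousAt_rpow_const _ _ (Or.inl (ne_of_gt hsC))).tendsto).comp hlamC
  have hmain := (htail.mul (hvs.mul hlamγ)).const_mul (2:ℝ)
  have hIic : ∀ x : ℝ, cdf d x + ∫ t in Set.Ioi x, d t = 1 := by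
    intro x
    have := MeasureTheory.integral_add_compl (measurableSet_Iic (a := x)) h.integrable
    rw [Set.compl_Iic] at this
    rw [show cdf d x = ∫ t in Set.Iic x, d t from rfl, this, h.integral_one]
  have hval : 2 * (Cd / γ * (ρ * Real.sqrt C ^ (-γ))) = 2 * Real.sqrt C * d (Real.sqrt C) / γ := by
    rw [hρ]
    have h1 : Real.sqrt C ^ (-γ) = C ^ ((1:ℝ)/2 * -γ) := by
      rw [Real.sqrt_eq_rpow, ← Real.rpow_mul hC.le]
    have h2 : C ^ ((γ + 1) / 2) * C ^ ((1:ℝ)/2 * -γ) = Real.sqrt C := by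
      rw [← Real.rpow_add hC, Real.sqrt_eq_rpow]
      congr 1
      ring
    rw [h1]
    calc 2 * (Cd / γ * (C ^ ((γ + 1) / 2) * d (Real.sqrt C) / Cd * C ^ ((1:ℝ)/2 * -γ)))
        = C ^ ((γ + 1) / 2) * C ^ ((1:ℝ)/2 * -γ) * d (Real.sqrt C) * (Cd / Cd) * 2 / γ := by
          ring
      _ = 2 * Real.sqrt C * d (Real.sqrt C) / γ := by
          rw [h2, div_self (ne_of_gt hCd)]
          ring
  rw [← hval]
  refine Tendsto.congr (fun m => ?_) hmain
  have e0 : 1 - cdf d (ω m) = ∫ t in Set.Ioi (ω m), d t := by linarith [hIic (ω m)]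
  have e1 : (ω m * s m) ^ (-γ) = ω m ^ (-γ) * s m ^ (-γ) :=
    Real.mul_rpow (hω m).le (hspos m).le
  have e2 : ω m ^ γ * ω m ^ (-γ) = 1 := by
    rw [← Real.rpow_add (hω m), add_neg_cancel, Real.rpow_zero]
  have e3 : s m ^ γ * s m ^ (-γ) = 1 := by
    rw [← Real.rpow_add (hspos m), add_neg_cancel, Real.rpow_zero]
  simp only [Function.comp_apply]
  rw [e0, e1]
  calc 2 * ((∫ t in Set.Ioi (ω m), d t) * ω m ^ γ *
        (v m * s m ^ γ * (ω m ^ (-γ) * s m ^ (-γ))))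
      = v m * (2 * ∫ t in Set.Ioi (ω m), d t) *
        ((ω m ^ γ * ω m ^ (-γ)) * (s m ^ γ * s m ^ (-γ))) := by ring
    _ = v m * (2 * ∫ t in Set.Ioi (ω m), d t) := by rw [e2, e3]; ring
end

section
/- Under the asymptotic framework, if ω_m is a sequence of positive solutions of the Bayes oracle equation (1+u_m)^(−1/2)·d(ω·(1+u_m)^(−1/2))/d(ω) = v_m, then the type II risk component satisfies 2·D(ω_m·(1+u_m)^(−1/2)) − 1 → C_2 = 2D(√C) − 1 as m → ∞. -/
open MeasureTheory Filter

/-- The "normalized tail" function `x ↦ d x * x ^ (γ+1)` is monotone on `(0,∞)`. -/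
lemma IsMPT.H_mono {d : ℝ → ℝ} {γ Cd : ℝ} (h : IsMPT d γ Cd) {a b : ℝ}
    (ha : 0 < a) (hab : a < b) : d a * a ^ (γ + 1) ≤ d b * b ^ (γ + 1) := by
  have hb : 0 < b := ha.trans hab
  have htla : Tendsto (fun n : ℕ => d (n * a) * (n * a) ^ (γ + 1)) atTop (nhds Cd) :=
    h.tail.comp (tendsto_natCast_atTop_atTop.atTop_mul_const ha)
  have htlb : Tendsto (fun n : ℕ => d (n * b) * (n * b) ^ (γ + 1)) atTop (nhds Cd) :=
    h.tail.comp (tendsto_natCast_atTop_atTop.atTop_mul_const hb)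
  have hF : Tendsto (fun n : ℕ => d a * a ^ (γ + 1) / (d (n * a) * (n * a) ^ (γ + 1)))
      atTop (nhds (d a * a ^ (γ + 1) / Cd)) := tendsto_const_nhds.div htla h.Cd_pos.ne'
  have hG : Tendsto (fun n : ℕ => d b * b ^ (γ + 1) / (d (n * b) * (n * b) ^ (γ + 1)))
      atTop (nhds (d b * b ^ (γ + 1) / Cd)) := tendsto_const_nhds.div htlb h.Cd_pos.ne'
  have hle : d a * a ^ (γ + 1) / Cd ≤ d b * b ^ (γ + 1) / Cd := by
    refine le_of_tendsto_of_tendsto hF hG ?_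
    filter_upwards [eventually_ge_atTop 2] with n hn
    have hn1 : (1 : ℝ) < (n : ℝ) := by exact_mod_cast Nat.lt_of_lt_of_le one_lt_two hn
    have hn0 : (0 : ℝ) < (n : ℝ) := lt_trans one_pos hn1
    have hkey := h.mlr (n : ℝ) hn1 (Set.mem_Ioi.2 (mul_pos hn0 ha))
      (Set.mem_Ioi.2 (mul_pos hn0 hb)) (by gcongr)
    simp only [mul_div_cancel_left₀ _ hn0.ne'] at hkey
    -- hkey : d a / d (n * a) < d b / d (n * b)
    have hda : 0 < d ((n : ℝ) * a) := h.pos _ (mul_pos hn0 ha)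
    have hdb : 0 < d ((n : ℝ) * b) := h.pos _ (mul_pos hn0 hb)
    have e1 : d a * a ^ (γ + 1) / (d ((n : ℝ) * a) * ((n : ℝ) * a) ^ (γ + 1))
        = (d a / d ((n : ℝ) * a)) / (n : ℝ) ^ (γ + 1) := by
      rw [Real.mul_rpow hn0.le ha.le]
      have h1 : ((n : ℝ)) ^ (γ + 1) ≠ 0 := (Real.rpow_pos_of_pos hn0 _).ne'
      have h2 : a ^ (γ + 1) ≠ 0 := (Real.rpow_pos_of_pos ha _).ne'
      field_simp
    have e2 : d b * b ^ (γ + 1) / (d ((n : ℝ) * b) * ((n : ℝ) * b) ^ (γ + 1))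
        = (d b / d ((n : ℝ) * b)) / (n : ℝ) ^ (γ + 1) := by
      rw [Real.mul_rpow hn0.le hb.le]
      have h1 : ((n : ℝ)) ^ (γ + 1) ≠ 0 := (Real.rpow_pos_of_pos hn0 _).ne'
      have h2 : b ^ (γ + 1) ≠ 0 := (Real.rpow_pos_of_pos hb _).ne'
      field_simp
    rw [e1, e2]
    have hnp : (0 : ℝ) < (n : ℝ) ^ (γ + 1) := Real.rpow_pos_of_pos hn0 _
    gcongr
  exact (div_le_div_iff_of_pos_right h.Cd_pos).1 hle

/-- The "normalized tail" function `x ↦ d x * x ^ (γ+1)` is strictly monotone on `(0,∞)`. -/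
lemma IsMPT.H_strict {d : ℝ → ℝ} {γ Cd : ℝ} (h : IsMPT d γ Cd) {a b : ℝ}
    (ha : 0 < a) (hab : a < b) : d a * a ^ (γ + 1) < d b * b ^ (γ + 1) := by
  rcases (h.H_mono ha hab).lt_or_eq with hlt | heqq
  · exact hlt
  exfalso
  have hb : 0 < b := ha.trans hab
  have hconst : ∀ x, a ≤ x → x ≤ b → d x * x ^ (γ + 1) = d a * a ^ (γ + 1) := by
    intro x h1 h2
    rcases eq_or_lt_of_le h1 with rfl | h1'
    · rfl
    rcases eq_or_lt_of_le h2 with rfl | h2'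
    · exact heqq.symm
    have l1 : d x * x ^ (γ + 1) ≤ d b * b ^ (γ + 1) := h.H_mono (ha.trans h1') h2'
    have l2 : d a * a ^ (γ + 1) ≤ d x * x ^ (γ + 1) := h.H_mono ha h1'
    linarith
  set c := d a * a ^ (γ + 1) with hc
  have hcpos : 0 < c := mul_pos (h.pos a ha) (Real.rpow_pos_of_pos ha _)
  have hdx : ∀ x, a ≤ x → x ≤ b → d x = c / x ^ (γ + 1) := by
    intro x h1 h2
    have hx0 : 0 < x := lt_of_lt_of_le ha h1
    have hxne : x ^ (γ + 1) ≠ 0 := (Real.rpow_pos_of_pos hx0 _).ne'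
    have := hconst x h1 h2
    rw [eq_div_iff hxne]
    exact this
  set t := Real.sqrt (b / a) with htdef
  have hba : 1 < b / a := (one_lt_div ha).2 hab
  have ht1 : 1 < t := by
    rw [htdef]
    have := Real.lt_sqrt (y := b / a) (x := 1) (by norm_num)
    rw [this, one_pow]
    exact hba
  have ht0 : 0 < t := lt_trans one_pos ht1
  have ht2 : t * t = b / a := Real.mul_self_sqrt (le_of_lt (lt_trans one_pos hba))
  have htb : t < b / a := by nlinarith
  have hta_lt_b : t * a < b := by
    have := mul_lt_mul_of_pos_right htb ha
    rwa [div_mul_cancel₀ _ ha.ne'] at this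
  have ha_lt_ta : a < t * a := by nlinarith
  have hbt_gt_a : a < b / t := by
    rw [lt_div_iff₀ ht0]
    nlinarith
  have hbt_le_b : b / t ≤ b := by
    rw [div_le_iff₀ ht0]
    nlinarith
  have hmlr := h.mlr t ht1 (Set.mem_Ioi.2 (mul_pos ht0 ha)) (Set.mem_Ioi.2 hb) hta_lt_b
  simp only [mul_div_cancel_left₀ _ ht0.ne'] at hmlr
  -- hmlr : d a / d (t * a) < d (b / t) / d b
  rw [hdx a le_rfl hab.le, hdx (t * a) ha_lt_ta.le hta_lt_b.le,
    hdx (b / t) hbt_gt_a.le hbt_le_b, hdx b hab.le le_rfl] at hmlr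
  have hane : a ^ (γ + 1) ≠ 0 := (Real.rpow_pos_of_pos ha _).ne'
  have htane : (t * a) ^ (γ + 1) ≠ 0 := (Real.rpow_pos_of_pos (mul_pos ht0 ha) _).ne'
  have hbne : b ^ (γ + 1) ≠ 0 := (Real.rpow_pos_of_pos hb _).ne'
  have hbtne : (b / t) ^ (γ + 1) ≠ 0 := (Real.rpow_pos_of_pos (div_pos hb ht0) _).ne'
  have htne : t ^ (γ + 1) ≠ 0 := (Real.rpow_pos_of_pos ht0 _).ne'
  have r1 : c / a ^ (γ + 1) / (c / (t * a) ^ (γ + 1)) = t ^ (γ + 1) := by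
    rw [Real.mul_rpow ht0.le ha.le]
    field_simp
  have r2 : c / (b / t) ^ (γ + 1) / (c / b ^ (γ + 1)) = t ^ (γ + 1) := by
    rw [Real.div_rpow hb.le ht0.le]
    rw [Real.div_rpow hb.le ht0.le] at hbtne
    field_simp
  rw [r1, r2] at hmlr
  exact lt_irrefl _ hmlr

/-- Proposition 2 (type II risk component): under the asymptotic framework, if `ω_m` solves the
Bayes oracle equation, then `2 * D (ω_m * (1 + u_m) ^ (-1/2)) - 1 → C₂ = 2 * D (√C) - 1`. -/
theorem oracle_typeII_risk (d : ℝ → ℝ) (γ Cd : ℝ) (h : IsMPT d γ Cd)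
    (heven : ∀ x, d (-x) = d x) (hcont : ContinuousOn d (Set.Ioi 0))
    (C : ℝ) (hC : 0 < C)
    (u v : ℕ → ℝ) (hu : ∀ m, 0 < u m) (hu' : Tendsto u atTop atTop)
    (hv : ∀ m, 0 < v m)
    (hvu : Tendsto (fun m => v m * u m ^ (-(γ / 2))) atTop
      (nhds (C ^ ((γ + 1) / 2) * d (Real.sqrt C) / Cd)))
    (ω : ℕ → ℝ) (hω : ∀ m, 0 < ω m)
    (hωeq : ∀ m, (1 + u m) ^ (-(1 : ℝ) / 2) * d (ω m * (1 + u m) ^ (-(1 : ℝ) / 2)) / d (ω m)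
      = v m) :
    Tendsto (fun m => 2 * cdf d (ω m * (1 + u m) ^ (-(1 : ℝ) / 2)) - 1) atTop
      (nhds (2 * cdf d (Real.sqrt C) - 1)) := by
  have hCd := h.Cd_pos
  have hsC : 0 < Real.sqrt C := Real.sqrt_pos.2 hC
  have hs1 : ∀ m, 1 < 1 + u m := fun m => by linarith [hu m]
  have hs0 : ∀ m, 0 < 1 + u m := fun m => lt_trans one_pos (hs1 m)
  set θ : ℕ → ℝ := fun m => (1 + u m) ^ ((1 : ℝ) / 2) with hθdef
  have hθ1 : ∀ m, 1 < θ m := fun m =>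
    (Real.one_lt_rpow_iff_of_pos (hs0 m)).2 (Or.inl ⟨hs1 m, by norm_num⟩)
  have hθ0 : ∀ m, 0 < θ m := fun m => lt_trans one_pos (hθ1 m)
  have hinv : ∀ m, (1 + u m) ^ (-(1 : ℝ) / 2) = (θ m)⁻¹ := fun m => by
    rw [neg_div, Real.rpow_neg (hs0 m).le]
  have hzθ : ∀ m, ω m * (1 + u m) ^ (-(1 : ℝ) / 2) = ω m / θ m := fun m => by
    rw [hinv m, div_eq_mul_inv]
  -- The oracle equation, rewritten
  have heq : ∀ m, d (ω m / θ m) / d (ω m) = v m * θ m := by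
    intro m
    have h0 := hωeq m
    rw [hzθ m, hinv m, mul_div_assoc] at h0
    rw [inv_mul_eq_div, div_eq_iff (hθ0 m).ne'] at h0
    exact h0
  -- θ → ∞
  have hθtop : Tendsto θ atTop atTop := by
    have : Tendsto (fun m => 1 + u m) atTop atTop := tendsto_atTop_add_const_left atTop 1 hu'
    exact (tendsto_rpow_atTop (by norm_num : (0 : ℝ) < 1 / 2)).comp this
  -- the rescaled RHS of the oracle equation converges to C₀
  have hP : Tendsto (fun m => v m * (1 + u m) ^ (-(γ / 2))) atTop
      (nhds (C ^ ((γ + 1) / 2) * d (Real.sqrt C) / Cd)) := by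
    have h1 : Tendsto (fun m => (1 + u m)⁻¹) atTop (nhds 0) :=
      tendsto_inv_atTop_zero.comp (tendsto_atTop_add_const_left atTop 1 hu')
    have h2 : Tendsto (fun m => (1 : ℝ) - (1 + u m)⁻¹) atTop (nhds 1) := by
      have h2' : Tendsto (fun m => (1 : ℝ) - (1 + u m)⁻¹) atTop (nhds (1 - 0)) :=
        tendsto_const_nhds.sub h1
      rwa [sub_zero] at h2'
    have huinv : Tendsto (fun m => u m / (1 + u m)) atTop (nhds 1) := by
      refine h2.congr fun m => ?_
      have hne : (1 : ℝ) + u m ≠ 0 := (hs0 m).ne'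
      field_simp
      ring
    have hrat : Tendsto (fun m => (u m / (1 + u m)) ^ (γ / 2)) atTop (nhds 1) := by
      have hcont1 : ContinuousAt (fun x : ℝ => x ^ (γ / 2)) 1 :=
        Real.continuousAt_rpow_const 1 (γ / 2) (Or.inl one_ne_zero)
      have := hcont1.tendsto.comp huinv
      rwa [Real.one_rpow] at this
    have h3 := hvu.mul hrat
    rw [mul_one] at h3
    refine h3.congr fun m => ?_
    rw [Real.div_rpow (hu m).le (hs0 m).le, Real.rpow_neg (hu m).le,
      Real.rpow_neg (hs0 m).le]
    have hune : (u m) ^ (γ / 2) ≠ 0 := (Real.rpow_pos_of_pos (hu m) _).ne'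
    have hsne : (1 + u m) ^ (γ / 2) ≠ 0 := (Real.rpow_pos_of_pos (hs0 m) _).ne'
    field_simp
  -- the rescaled likelihood ratio at a fixed point w converges to H(w)/Cd
  have hQ : ∀ w : ℝ, 0 < w →
      Tendsto (fun m => d w * w ^ (γ + 1) / (d (θ m * w) * (θ m * w) ^ (γ + 1))) atTop
        (nhds (d w * w ^ (γ + 1) / Cd)) := by
    intro w hw
    exact tendsto_const_nhds.div (h.tail.comp (hθtop.atTop_mul_const hw)) hCd.ne'
  -- identity for the limit constant
  have hC0 : C ^ ((γ + 1) / 2) * d (Real.sqrt C) = d (Real.sqrt C) * Real.sqrt C ^ (γ + 1) := by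
    rw [Real.sqrt_eq_rpow, ← Real.rpow_mul hC.le, show 1 / 2 * (γ + 1) = (γ + 1) / 2 by ring,
      mul_comm]
  -- key algebraic identity
  have hIm : ∀ m, ∀ w : ℝ, 0 < w →
      (1 + u m) ^ (-(γ / 2)) * (θ m * w) ^ (γ + 1) = θ m * w ^ (γ + 1) := by
    intro m w hw
    rw [Real.mul_rpow (hθ0 m).le hw.le, hθdef]
    simp only
    rw [← Real.rpow_mul (hs0 m).le, ← mul_assoc, ← Real.rpow_add (hs0 m),
      show -(γ / 2) + 1 / 2 * (γ + 1) = 1 / 2 by ring]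
  -- two equivalent forms of the crucial inequality
  have hiff1 : ∀ m, ∀ w : ℝ, 0 < w →
      (v m * (1 + u m) ^ (-(γ / 2)) < d w * w ^ (γ + 1) / (d (θ m * w) * (θ m * w) ^ (γ + 1))
        ↔ v m * θ m < d w / d (θ m * w)) := by
    intro m w hw
    have hθw : 0 < θ m * w := mul_pos (hθ0 m) hw
    have hD : 0 < d (θ m * w) := h.pos _ hθw
    have hT : 0 < (θ m * w) ^ (γ + 1) := Real.rpow_pos_of_pos hθw _
    have hww : 0 < w ^ (γ + 1) := Real.rpow_pos_of_pos hw _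
    have hprod : v m * (1 + u m) ^ (-(γ / 2)) * (d (θ m * w) * (θ m * w) ^ (γ + 1))
        = v m * θ m * d (θ m * w) * w ^ (γ + 1) := by
      calc v m * (1 + u m) ^ (-(γ / 2)) * (d (θ m * w) * (θ m * w) ^ (γ + 1))
          = v m * ((1 + u m) ^ (-(γ / 2)) * (θ m * w) ^ (γ + 1)) * d (θ m * w) := by ring
        _ = v m * (θ m * w ^ (γ + 1)) * d (θ m * w) := by rw [hIm m w hw]
        _ = v m * θ m * d (θ m * w) * w ^ (γ + 1) := by ring
    rw [lt_div_iff₀ (mul_pos hD hT), hprod, mul_lt_mul_iff_of_pos_right hww, lt_div_iff₀ hD]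
  have hiff2 : ∀ m, ∀ w : ℝ, 0 < w →
      (d w * w ^ (γ + 1) / (d (θ m * w) * (θ m * w) ^ (γ + 1)) < v m * (1 + u m) ^ (-(γ / 2))
        ↔ d w / d (θ m * w) < v m * θ m) := by
    intro m w hw
    have hθw : 0 < θ m * w := mul_pos (hθ0 m) hw
    have hD : 0 < d (θ m * w) := h.pos _ hθw
    have hT : 0 < (θ m * w) ^ (γ + 1) := Real.rpow_pos_of_pos hθw _
    have hww : 0 < w ^ (γ + 1) := Real.rpow_pos_of_pos hw _
    have hprod : v m * (1 + u m) ^ (-(γ / 2)) * (d (θ m * w) * (θ m * w) ^ (γ + 1))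
        = v m * θ m * d (θ m * w) * w ^ (γ + 1) := by
      calc v m * (1 + u m) ^ (-(γ / 2)) * (d (θ m * w) * (θ m * w) ^ (γ + 1))
          = v m * ((1 + u m) ^ (-(γ / 2)) * (θ m * w) ^ (γ + 1)) * d (θ m * w) := by ring
        _ = v m * (θ m * w ^ (γ + 1)) * d (θ m * w) := by rw [hIm m w hw]
        _ = v m * θ m * d (θ m * w) * w ^ (γ + 1) := by ring
    rw [div_lt_iff₀ (mul_pos hD hT), hprod, mul_lt_mul_iff_of_pos_right hww, div_lt_iff₀ hD]
  -- the main convergence: z m → √C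
  have hzlim : Tendsto (fun m => ω m * (1 + u m) ^ (-(1 : ℝ) / 2)) atTop
      (nhds (Real.sqrt C)) := by
    rw [tendsto_order]
    constructor
    · -- lower bounds
      intro b hb
      set w := (max b 0 + Real.sqrt C) / 2 with hwdef
      have hmax : max b 0 < Real.sqrt C := max_lt hb hsC
      have hw0 : 0 < w := by
        have := le_max_right b 0
        rw [hwdef]; linarith
      have hwC : w < Real.sqrt C := by rw [hwdef]; linarith
      have hbw : b < w := by
        have := le_max_left b 0
        rw [hwdef]; linarith
      have hlt : d w * w ^ (γ + 1) / Cd < C ^ ((γ + 1) / 2) * d (Real.sqrt C) / Cd := by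
        rw [hC0]
        exact (div_lt_div_iff_of_pos_right hCd).2 (h.H_strict hw0 hwC)
      have hev := Tendsto.eventually_lt (hQ w hw0) hP hlt
      filter_upwards [hev] with m hm
      have hws : d w / d (θ m * w) < v m * θ m := (hiff2 m w hw0).1 hm
      rw [← heq m] at hws
      -- use monotonicity of the likelihood ratio to compare θ m * w and ω m
      have hθw : 0 < θ m * w := mul_pos (hθ0 m) hw0
      have hlt2 : θ m * w < ω m := by
        by_contra hcon
        push_neg at hcon
        have hmono := (h.mlr (θ m) (hθ1 m)).monotoneOn (Set.mem_Ioi.2 (hω m))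
          (Set.mem_Ioi.2 hθw) hcon
        rw [mul_div_cancel_left₀ _ (hθ0 m).ne'] at hmono
        -- hmono : d (ω m / θ m) / d (ω m) ≤ d w / d (θ m * w)
        exact absurd (lt_of_le_of_lt hmono hws) (lt_irrefl _)
      rw [hzθ m]
      calc b < w := hbw
        _ < ω m / θ m := by rw [lt_div_iff₀ (hθ0 m)]; linarith [hlt2]
    · -- upper bounds
      intro b hb
      set w := (Real.sqrt C + b) / 2 with hwdef
      have hw0 : 0 < w := by rw [hwdef]; linarith
      have hwC : Real.sqrt C < w := by rw [hwdef]; linarith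
      have hwb : w < b := by rw [hwdef]; linarith
      have hlt : C ^ ((γ + 1) / 2) * d (Real.sqrt C) / Cd < d w * w ^ (γ + 1) / Cd := by
        rw [hC0]
        exact (div_lt_div_iff_of_pos_right hCd).2 (h.H_strict hsC hwC)
      have hev := Tendsto.eventually_lt hP (hQ w hw0) hlt
      filter_upwards [hev] with m hm
      have hws : v m * θ m < d w / d (θ m * w) := (hiff1 m w hw0).1 hm
      rw [← heq m] at hws
      have hθw : 0 < θ m * w := mul_pos (hθ0 m) hw0
      have hlt2 : ω m < θ m * w := by
        by_contra hcon
        push_neg at hcon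
        have hmono := (h.mlr (θ m) (hθ1 m)).monotoneOn (Set.mem_Ioi.2 hθw)
          (Set.mem_Ioi.2 (hω m)) hcon
        rw [mul_div_cancel_left₀ _ (hθ0 m).ne'] at hmono
        exact absurd (lt_of_le_of_lt hmono hws) (lt_irrefl _)
      rw [hzθ m]
      calc ω m / θ m < w := by rw [div_lt_iff₀ (hθ0 m)]; linarith [hlt2]
        _ < b := hwb
  -- continuity of the cdf
  have hcdf : Continuous (cdf d) := by
    have hint : ∀ a b : ℝ, IntervalIntegrable d volume a b := fun a b =>
      h.integrable.intervalIntegrable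
    have h1 : Continuous fun x => ∫ t in (0 : ℝ)..x, d t :=
      intervalIntegral.continuous_primitive hint 0
    have h2 : cdf d = fun x => (∫ t in (0 : ℝ)..x, d t) + cdf d 0 := by
      funext x
      have := intervalIntegral.integral_Iic_sub_Iic (μ := volume) (f := d) (a := (0 : ℝ))
        (b := x) h.integrable.integrableOn h.integrable.integrableOn
      unfold cdf
      linarith [this]
    rw [h2]
    exact h1.add continuous_const
  have hfinal := (hcdf.tendsto (Real.sqrt C)).comp hzlim
  exact (hfinal.const_mul 2).sub_const 1
end

section
/- Under the asymptotic framework, a sequence of fixed thresholds ω_m > 0 satisfies v_m·2(1 − D(ω_m)) + 2D(ω_m·(1+u_m)^(−1/2)) − 1 → C_1 + C_2 (i.e., the fixed thresholding procedure is asymptotically Bayes optimal under sparsity) if and only if ω_m²/(C·(v_m/C_0)^(2/γ)) → 1 as m → ∞, where C_1 = 2√C·d(√C)/γ and C_2 = 2D(√C) − 1. -/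
open MeasureTheory Filter
open Set

namespace MPTaux

variable {d : ℝ → ℝ} {γ Cd : ℝ}

lemma ratio_tendsto (h : IsMPT d γ Cd) {θ : ℝ} (hθ : 1 < θ) :
    Tendsto (fun x => d (x / θ) / d x) atTop (nhds (θ ^ (γ + 1))) := by
  have hθ0 : (0:ℝ) < θ := lt_trans one_pos hθ
  have h1 : Tendsto (fun x => d (x / θ) * (x / θ) ^ (γ + 1)) atTop (nhds Cd) :=
    h.tail.comp (tendsto_id.atTop_div_const hθ0)
  have key : Tendsto (fun x => (d (x / θ) * (x / θ) ^ (γ + 1)) / (d x * x ^ (γ + 1)) * θ ^ (γ + 1))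
      atTop (nhds (Cd / Cd * θ ^ (γ + 1))) := (h1.div h.tail h.Cd_pos.ne').mul_const _
  rw [div_self h.Cd_pos.ne', one_mul] at key
  refine key.congr' ?_
  filter_upwards [eventually_gt_atTop 0] with x hx
  have hd : d x ≠ 0 := (h.pos x hx).ne'
  have hxp : (0:ℝ) < x ^ (γ + 1) := Real.rpow_pos_of_pos hx _
  have hθp : (0:ℝ) < θ ^ (γ + 1) := Real.rpow_pos_of_pos hθ0 _
  rw [Real.div_rpow hx.le hθ0.le]
  field_simp

lemma ratio_lt (h : IsMPT d γ Cd) {θ : ℝ} (hθ : 1 < θ) {x : ℝ} (hx : 0 < x) :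
    d (x / θ) / d x < θ ^ (γ + 1) := by
  have hmono := h.mlr θ hθ
  have h1 : d (x / θ) / d x < d ((x + 1) / θ) / d (x + 1) :=
    hmono (mem_Ioi.mpr hx) (mem_Ioi.mpr (by linarith)) (by linarith)
  have h2 : d ((x + 1) / θ) / d (x + 1) ≤ θ ^ (γ + 1) := by
    refine ge_of_tendsto (ratio_tendsto h hθ) ?_
    filter_upwards [eventually_ge_atTop (x + 2)] with y hy
    exact (hmono (mem_Ioi.mpr (by linarith)) (mem_Ioi.mpr (by linarith)) (by linarith)).le
  linarith

lemma psi_strictMonoOn (h : IsMPT d γ Cd) :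
    StrictMonoOn (fun x => d x * x ^ (γ + 1)) (Ioi 0) := by
  intro a ha b hb hab
  rw [mem_Ioi] at ha hb
  have hθ : 1 < b / a := (one_lt_div ha).mpr hab
  have key := ratio_lt h hθ hb
  have hba : b / (b / a) = a := by field_simp
  rw [hba, Real.div_rpow hb.le ha.le,
    div_lt_div_iff₀ (h.pos b hb) (Real.rpow_pos_of_pos ha _)] at key
  simpa [mul_comm] using key

lemma psi_lt (h : IsMPT d γ Cd) {x : ℝ} (hx : 0 < x) : d x * x ^ (γ + 1) < Cd := by
  have h1 : d x * x ^ (γ + 1) < d (x + 1) * (x + 1) ^ (γ + 1) :=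
    psi_strictMonoOn h (mem_Ioi.mpr hx) (mem_Ioi.mpr (by linarith)) (by linarith)
  have h2 : d (x + 1) * (x + 1) ^ (γ + 1) ≤ Cd := by
    refine ge_of_tendsto h.tail ?_
    filter_upwards [eventually_ge_atTop (x + 2)] with y hy
    exact ((psi_strictMonoOn h).monotoneOn (mem_Ioi.mpr (by linarith))
      (mem_Ioi.mpr (by linarith)) (by linarith))
  linarith

lemma integral_Ioi_rpow_aux (h : IsMPT d γ Cd) {x : ℝ} (hx : 0 < x) :
    ∫ t in Ioi x, t ^ (-(γ + 1)) = x ^ (-γ) / γ := by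
  have hγ := h.gamma_pos
  rw [integral_Ioi_rpow_of_lt (by linarith) hx]
  have he : -(γ + 1) + 1 = -γ := by ring
  rw [he, neg_div_neg_eq]

lemma integrableOn_rpow_aux (h : IsMPT d γ Cd) {x : ℝ} (hx : 0 < x) :
    IntegrableOn (fun t : ℝ => t ^ (-(γ + 1))) (Ioi x) := by
  have hγ := h.gamma_pos
  exact integrableOn_Ioi_rpow_of_lt (by linarith) hx

lemma d_eq_psi (h : IsMPT d γ Cd) {t : ℝ} (ht : 0 < t) :
    d t = d t * t ^ (γ + 1) * t ^ (-(γ + 1)) := by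
  rw [mul_assoc, ← Real.rpow_add ht, add_neg_cancel, Real.rpow_zero, mul_one]

lemma tail_eq (h : IsMPT d γ Cd) (x : ℝ) : 1 - cdf d x = ∫ t in Ioi x, d t := by
  have key := intervalIntegral.integral_Iic_add_Ioi (μ := volume) (b := x)
    (h.integrable.integrableOn) (h.integrable.integrableOn)
  rw [h.integral_one] at key
  unfold cdf
  linarith

lemma tail_nonneg (h : IsMPT d γ Cd) (x : ℝ) : 0 ≤ ∫ t in Ioi x, d t :=
  setIntegral_nonneg measurableSet_Ioi fun t _ => h.nonneg t

lemma tail_le (h : IsMPT d γ Cd) {x : ℝ} (hx : 0 < x) :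
    ∫ t in Ioi x, d t ≤ Cd * (x ^ (-γ) / γ) := by
  have hle : ∫ t in Ioi x, d t ≤ ∫ t in Ioi x, Cd * t ^ (-(γ + 1)) := by
    refine setIntegral_mono_on (h.integrable.integrableOn)
      ((integrableOn_rpow_aux h hx).const_mul Cd) measurableSet_Ioi ?_
    intro t ht
    rw [mem_Ioi] at ht
    have ht0 : 0 < t := hx.trans ht
    rw [d_eq_psi h ht0]
    exact mul_le_mul_of_nonneg_right (psi_lt h ht0).le (Real.rpow_nonneg ht0.le _)
  rwa [integral_const_mul, integral_Ioi_rpow_aux h hx] at hle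

lemma le_tail (h : IsMPT d γ Cd) {b x : ℝ} (hb : 0 < b) (hbx : b ≤ x) :
    d b * b ^ (γ + 1) * (x ^ (-γ) / γ) ≤ ∫ t in Ioi x, d t := by
  have hx : 0 < x := lt_of_lt_of_le hb hbx
  have hle : ∫ t in Ioi x, (d b * b ^ (γ + 1)) * t ^ (-(γ + 1)) ≤ ∫ t in Ioi x, d t := by
    refine setIntegral_mono_on ((integrableOn_rpow_aux h hx).const_mul _)
      (h.integrable.integrableOn) measurableSet_Ioi ?_
    intro t ht
    rw [mem_Ioi] at ht
    have ht0 : 0 < t := hx.trans ht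
    have hψ : d b * b ^ (γ + 1) ≤ d t * t ^ (γ + 1) :=
      (psi_strictMonoOn h).monotoneOn (mem_Ioi.mpr hb) (mem_Ioi.mpr ht0) (hbx.trans ht.le)
    calc d b * b ^ (γ + 1) * t ^ (-(γ + 1))
        ≤ d t * t ^ (γ + 1) * t ^ (-(γ + 1)) :=
          mul_le_mul_of_nonneg_right hψ (Real.rpow_nonneg ht0.le _)
      _ = d t := (d_eq_psi h ht0).symm
  rwa [integral_const_mul, integral_Ioi_rpow_aux h hx] at hle

lemma tail_mul_tendsto (h : IsMPT d γ Cd) :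
    Tendsto (fun x => (∫ t in Ioi x, d t) * x ^ γ) atTop (nhds (Cd / γ)) := by
  have hγ := h.gamma_pos
  refine tendsto_of_tendsto_of_tendsto_of_le_of_le' (h.tail.div_const γ) tendsto_const_nhds ?_ ?_
  · filter_upwards [eventually_gt_atTop 0] with x hx
    have key := le_tail h hx le_rfl
    have hxg : (0:ℝ) < x ^ γ := Real.rpow_pos_of_pos hx _
    have hinv : x ^ (-γ) * x ^ γ = 1 := by
      rw [← Real.rpow_add hx]; simp
    calc d x * x ^ (γ + 1) / γ
        = d x * x ^ (γ + 1) * (x ^ (-γ) * x ^ γ) / γ := by rw [hinv, mul_one]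
      _ = d x * x ^ (γ + 1) * (x ^ (-γ) / γ) * x ^ γ := by ring
      _ ≤ (∫ t in Ioi x, d t) * x ^ γ := mul_le_mul_of_nonneg_right key hxg.le
  · filter_upwards [eventually_gt_atTop 0] with x hx
    have key := tail_le h hx
    have hxg : (0:ℝ) < x ^ γ := Real.rpow_pos_of_pos hx _
    have hinv : x ^ (-γ) * x ^ γ = 1 := by
      rw [← Real.rpow_add hx]; simp
    calc (∫ t in Ioi x, d t) * x ^ γ
        ≤ Cd * (x ^ (-γ) / γ) * x ^ γ := mul_le_mul_of_nonneg_right key hxg.le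
      _ = Cd / γ * (x ^ (-γ) * x ^ γ) := by ring
      _ = Cd / γ := by rw [hinv, mul_one]

lemma cdf_sub (h : IsMPT d γ Cd) (a b : ℝ) :
    cdf d b - cdf d a = ∫ t in a..b, d t :=
  intervalIntegral.integral_Iic_sub_Iic (h.integrable.integrableOn) (h.integrable.integrableOn)

lemma cdf_continuous (h : IsMPT d γ Cd) : Continuous (cdf d) := by
  have h1 := h.integrable.continuous_primitive 0
  have h2 : cdf d = fun b => cdf d 0 + ∫ t in (0:ℝ)..b, d t := by
    funext b
    rw [← cdf_sub h]
    ring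
  rw [h2]
  exact continuous_const.add h1

lemma cdf_mono (h : IsMPT d γ Cd) : Monotone (cdf d) := fun a b hab =>
  setIntegral_mono_set h.integrable.integrableOn
    (Filter.Eventually.of_forall fun x => h.nonneg x)
    (HasSubset.Subset.eventuallyLE (Iic_subset_Iic.mpr hab))

lemma cdf_zero_eq (h : IsMPT d γ Cd) (heven : ∀ x, d (-x) = d x) : cdf d 0 = 1 / 2 := by
  have h1 : cdf d 0 = ∫ t in Ioi (0:ℝ), d t := by
    unfold cdf
    have h0 : ∫ t in Iic (0:ℝ), d t = ∫ t in Iic (0:ℝ), d (-t) := by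
      simp only [heven]
    rw [h0, integral_comp_neg_Iic]
    norm_num
  have h2 := tail_eq h 0
  linarith

lemma cdf_tendsto_one (h : IsMPT d γ Cd) : Tendsto (cdf d) atTop (nhds 1) := by
  have hγ := h.gamma_pos
  have hT : Tendsto (fun x => ∫ t in Ioi x, d t) atTop (nhds 0) := by
    have hup : Tendsto (fun x : ℝ => Cd * (x ^ (-γ) / γ)) atTop (nhds (Cd * (0 / γ))) :=
      ((tendsto_rpow_neg_atTop hγ).div_const γ).const_mul Cd
    rw [zero_div, mul_zero] at hup
    refine tendsto_of_tendsto_of_tendsto_of_le_of_le' tendsto_const_nhds hup ?_ ?_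
    · exact Filter.Eventually.of_forall fun x => tail_nonneg h x
    · filter_upwards [eventually_gt_atTop 0] with x hx using tail_le h hx
  have : Tendsto (fun x => 1 - ∫ t in Ioi x, d t) atTop (nhds (1 - 0)) :=
    tendsto_const_nhds.sub hT
  rw [sub_zero] at this
  refine this.congr fun x => ?_
  rw [← tail_eq h x]
  ring

lemma rpow_intervalIntegrable (h : IsMPT d γ Cd) {a b : ℝ} (ha : 0 < a) (hb : 0 < b) :
    IntervalIntegrable (fun t : ℝ => t ^ (-(γ + 1))) volume a b := by
  apply ContinuousOn.intervalIntegrable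
  intro t ht
  have ht0 : 0 < t := lt_of_lt_of_le (lt_min ha hb) ht.1
  exact (Real.continuousAt_rpow_const t _ (Or.inl ht0.ne')).continuousWithinAt

lemma integral_rpow_aux (h : IsMPT d γ Cd) {a b : ℝ} (ha : 0 < a) (hb : 0 < b) :
    ∫ t in a..b, (t:ℝ) ^ (-(γ + 1)) = (a ^ (-γ) - b ^ (-γ)) / γ := by
  have hγ := h.gamma_pos
  rw [integral_rpow (Or.inr ⟨by intro hc; apply hγ.ne'; linarith,
    fun hc => absurd (lt_of_lt_of_le (lt_min ha hb) hc.1) (by norm_num)⟩)]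
  have he : -(γ + 1) + 1 = -γ := by ring
  rw [he, div_neg, ← neg_div, neg_sub]

lemma tail_gt (h : IsMPT d γ Cd) {x : ℝ} (hx : 0 < x) :
    d x * x ^ (γ + 1) * (x ^ (-γ) / γ) < ∫ t in Ioi x, d t := by
  have hγ := h.gamma_pos
  have hx1 : (0:ℝ) < x + 1 := by linarith
  have hsplit : (∫ t in Ioi x, d t) = (∫ t in x..(x+1), d t) + ∫ t in Ioi (x+1), d t := by
    have h1 := tail_eq h x
    have h2 := tail_eq h (x+1)
    have h3 := cdf_sub h x (x+1)
    linarith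
  have hrint := integral_rpow_aux h hx hx1
  have hmid : d x * x ^ (γ + 1) * ((x ^ (-γ) - (x+1) ^ (-γ)) / γ) ≤ ∫ t in x..(x+1), d t := by
    have hmono := intervalIntegral.integral_mono_on (by linarith : x ≤ x + 1)
      ((rpow_intervalIntegrable h hx hx1).const_mul (d x * x ^ (γ + 1)))
      (h.integrable.intervalIntegrable)
      (fun t ht => by
        have ht0 : 0 < t := lt_of_lt_of_le hx ht.1
        have hψ : d x * x ^ (γ + 1) ≤ d t * t ^ (γ + 1) :=
          (psi_strictMonoOn h).monotoneOn (mem_Ioi.mpr hx) (mem_Ioi.mpr ht0) ht.1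
        calc d x * x ^ (γ + 1) * t ^ (-(γ + 1))
            ≤ d t * t ^ (γ + 1) * t ^ (-(γ + 1)) :=
              mul_le_mul_of_nonneg_right hψ (Real.rpow_nonneg ht0.le _)
          _ = d t := (d_eq_psi h ht0).symm)
    rwa [intervalIntegral.integral_const_mul, hrint] at hmono
  have htail : d (x+1) * (x+1) ^ (γ + 1) * ((x+1) ^ (-γ) / γ) ≤ ∫ t in Ioi (x+1), d t :=
    le_tail h hx1 le_rfl
  have hψlt : d x * x ^ (γ + 1) < d (x+1) * (x+1) ^ (γ + 1) :=
    psi_strictMonoOn h (mem_Ioi.mpr hx) (mem_Ioi.mpr hx1) (by linarith)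
  have hp : (0:ℝ) < (x+1) ^ (-γ) / γ := div_pos (Real.rpow_pos_of_pos hx1 _) hγ
  have h4 := mul_lt_mul_of_pos_right hψlt hp
  ring_nf at hsplit hmid htail h4 ⊢
  linarith

lemma sqrt_rpow_aux {x : ℝ} (hx : 0 < x) (p : ℝ) : (Real.sqrt x) ^ p = x ^ (p / 2) := by
  rw [Real.sqrt_eq_rpow, ← Real.rpow_mul hx.le]
  congr 1
  ring

lemma psi_sqrt_mul (h : IsMPT d γ Cd) {C : ℝ} (hC : 0 < C) :
    d (Real.sqrt C) * (Real.sqrt C) ^ (γ + 1) * (Real.sqrt C) ^ (-γ)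
      = Real.sqrt C * d (Real.sqrt C) := by
  have hs : 0 < Real.sqrt C := Real.sqrt_pos.mpr hC
  have he : γ + 1 + -γ = 1 := by ring
  rw [mul_assoc, ← Real.rpow_add hs, he, Real.rpow_one]
  ring

lemma g1_lt_one (h : IsMPT d γ Cd) {C : ℝ} (hC : 0 < C) :
    2 * Real.sqrt C * d (Real.sqrt C) / γ + (2 * cdf d (Real.sqrt C) - 1) < 1 := by
  have hs : 0 < Real.sqrt C := Real.sqrt_pos.mpr hC
  have key := tail_gt h hs
  have hte := tail_eq h (Real.sqrt C)
  have hid : d (Real.sqrt C) * (Real.sqrt C) ^ (γ + 1) * ((Real.sqrt C) ^ (-γ) / γ)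
      = Real.sqrt C * d (Real.sqrt C) / γ := by
    rw [← psi_sqrt_mul h hC]
    ring
  rw [hid] at key
  ring_nf at key hte ⊢
  linarith

lemma gap (h : IsMPT d γ Cd) {C r : ℝ} (hC : 0 < C) (hr : 0 < r) (hne : r ≠ 1) :
    2 * Real.sqrt C * d (Real.sqrt C) / γ + (2 * cdf d (Real.sqrt C) - 1)
      < 2 * Real.sqrt C * d (Real.sqrt C) / γ * r ^ (-(γ / 2))
        + (2 * cdf d (Real.sqrt (r * C)) - 1) := by
  have hγ := h.gamma_pos
  have hrC : 0 < r * C := mul_pos hr hC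
  set a := Real.sqrt C with ha_def
  set b := Real.sqrt (r * C) with hb_def
  have ha : 0 < a := Real.sqrt_pos.mpr hC
  have hb : 0 < b := Real.sqrt_pos.mpr hrC
  set ψa := d a * a ^ (γ + 1) with hψa_def
  have hψa_pos : 0 < ψa := mul_pos (h.pos a ha) (Real.rpow_pos_of_pos ha _)
  -- exponent conversions
  have hexp : -γ / 2 = -(γ / 2) := by ring
  have hb' : b ^ (-γ) = r ^ (-(γ / 2)) * a ^ (-γ) := by
    rw [hb_def, ha_def, sqrt_rpow_aux hrC, sqrt_rpow_aux hC,
      Real.mul_rpow hr.le hC.le, hexp]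
  have hK := integral_rpow_aux h ha hb
  -- the strict inequality
  have hkey : ψa * ((a ^ (-γ) - b ^ (-γ)) / γ) < ∫ t in a..b, d t := by
    rw [← hK]
    rcases lt_or_gt_of_ne hne with hlt | hgt
    · -- r < 1 : b < a
      have hba : b < a := by
        rw [ha_def, hb_def]
        exact Real.sqrt_lt_sqrt hrC.le (by nlinarith)
      have hpos : 0 < ∫ t in b..a, (ψa * t ^ (-(γ + 1)) - d t) := by
        refine intervalIntegral.intervalIntegral_pos_of_pos_on
          (((rpow_intervalIntegrable h hb ha).const_mul ψa).sub
            (h.integrable.intervalIntegrable)) (fun t ht => ?_) hba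
        have ht0 : 0 < t := hb.trans ht.1
        have hta : t < a := ht.2
        have hψlt : d t * t ^ (γ + 1) < ψa :=
          psi_strictMonoOn h (mem_Ioi.mpr ht0) (mem_Ioi.mpr ha) hta
        have : d t < ψa * t ^ (-(γ + 1)) := by
          calc d t = d t * t ^ (γ + 1) * t ^ (-(γ + 1)) := d_eq_psi h ht0
            _ < ψa * t ^ (-(γ + 1)) :=
              mul_lt_mul_of_pos_right hψlt (Real.rpow_pos_of_pos ht0 _)
        linarith
      rw [intervalIntegral.integral_sub
        ((rpow_intervalIntegrable h hb ha).const_mul ψa)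
        (h.integrable.intervalIntegrable), intervalIntegral.integral_const_mul] at hpos
      have e1 : (∫ t in a..b, d t) = -∫ t in b..a, d t :=
        intervalIntegral.integral_symm b a
      have e2 : (∫ t in a..b, (t:ℝ) ^ (-(γ + 1))) = -∫ t in b..a, (t:ℝ) ^ (-(γ + 1)) :=
        intervalIntegral.integral_symm b a
      rw [e1, e2]
      ring_nf at hpos ⊢
      linarith
    · -- 1 < r : a < b
      have hab : a < b := by
        rw [ha_def, hb_def]
        exact Real.sqrt_lt_sqrt hC.le (by nlinarith)
      have hpos : 0 < ∫ t in a..b, (d t - ψa * t ^ (-(γ + 1))) := by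
        refine intervalIntegral.intervalIntegral_pos_of_pos_on
          ((h.integrable.intervalIntegrable).sub
            ((rpow_intervalIntegrable h ha hb).const_mul ψa)) (fun t ht => ?_) hab
        have ht0 : 0 < t := ha.trans ht.1
        have hψlt : ψa < d t * t ^ (γ + 1) :=
          psi_strictMonoOn h (mem_Ioi.mpr ha) (mem_Ioi.mpr ht0) ht.1
        have : ψa * t ^ (-(γ + 1)) < d t := by
          calc ψa * t ^ (-(γ + 1)) < d t * t ^ (γ + 1) * t ^ (-(γ + 1)) :=
              mul_lt_mul_of_pos_right hψlt (Real.rpow_pos_of_pos ht0 _)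
            _ = d t := (d_eq_psi h ht0).symm
        linarith
      rw [intervalIntegral.integral_sub (h.integrable.intervalIntegrable)
        ((rpow_intervalIntegrable h ha hb).const_mul ψa),
        intervalIntegral.integral_const_mul] at hpos
      linarith
  have hsub := cdf_sub h a b
  have hmul : ψa * ((a ^ (-γ) - b ^ (-γ)) / γ)
      = Real.sqrt C * d (Real.sqrt C) / γ * (1 - r ^ (-(γ / 2))) := by
    rw [hb']
    have := psi_sqrt_mul h hC
    rw [ha_def] at *
    calc d (Real.sqrt C) * (Real.sqrt C) ^ (γ + 1)
          * (((Real.sqrt C) ^ (-γ) - r ^ (-(γ / 2)) * (Real.sqrt C) ^ (-γ)) / γ)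
        = d (Real.sqrt C) * (Real.sqrt C) ^ (γ + 1) * (Real.sqrt C) ^ (-γ)
            * (1 - r ^ (-(γ / 2))) / γ := by ring
      _ = Real.sqrt C * d (Real.sqrt C) / γ * (1 - r ^ (-(γ / 2))) := by rw [this]; ring
  rw [hmul] at hkey
  ring_nf at hkey hsub ⊢
  linarith


lemma risk_tendsto (h : IsMPT d γ Cd)
    {C : ℝ} (hC : 0 < C)
    {u v : ℕ → ℝ} (hu : ∀ m, 0 < u m) (hu' : Tendsto u atTop atTop)
    (hv : ∀ m, 0 < v m)
    (hvu : Tendsto (fun m => v m * u m ^ (-(γ / 2))) atTop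
      (nhds (C ^ ((γ + 1) / 2) * d (Real.sqrt C) / Cd)))
    {ω : ℕ → ℝ} (hω : ∀ m, 0 < ω m) {r : ℝ} (hr : 0 < r)
    (hρ : Tendsto (fun m => ω m ^ 2
        / (C * (v m / (C ^ ((γ + 1) / 2) * d (Real.sqrt C) / Cd)) ^ (2 / γ)))
      atTop (nhds r)) :
    Tendsto (fun m => v m * (2 * (1 - cdf d (ω m)))
        + (2 * cdf d (ω m * (1 + u m) ^ (-(1 : ℝ) / 2)) - 1)) atTop
      (nhds (2 * Real.sqrt C * d (Real.sqrt C) / γ * r ^ (-(γ / 2))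
        + (2 * cdf d (Real.sqrt (r * C)) - 1))) := by
  have hγ := h.gamma_pos
  set C0 : ℝ := C ^ ((γ + 1) / 2) * d (Real.sqrt C) / Cd with hC0def
  have hC0 : 0 < C0 := div_pos (mul_pos (Real.rpow_pos_of_pos hC _)
    (h.pos _ (Real.sqrt_pos.mpr hC))) h.Cd_pos
  set s : ℕ → ℝ := fun m => C * (v m / C0) ^ (2 / γ) with hsdef
  have hs : ∀ m, 0 < s m := fun m =>
    mul_pos hC (Real.rpow_pos_of_pos (div_pos (hv m) hC0) _)
  set ρ : ℕ → ℝ := fun m => ω m ^ 2 / s m with hρdef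
  have hρpos : ∀ m, 0 < ρ m := fun m => div_pos (pow_pos (hω m) 2) (hs m)
  have hω2 : ∀ m, ω m ^ 2 = ρ m * s m := fun m => (div_mul_cancel₀ _ (hs m).ne').symm
  -- s m ^ (γ/2) = C^(γ/2) * (v m / C0)
  have hsγ : ∀ m, (s m) ^ (γ / 2) = C ^ (γ / 2) * (v m / C0) := by
    intro m
    have h1 : (0:ℝ) < v m / C0 := div_pos (hv m) hC0
    have h2 : (2 / γ) * (γ / 2) = 1 := by field_simp
    rw [hsdef]
    rw [Real.mul_rpow hC.le (Real.rpow_nonneg h1.le _), ← Real.rpow_mul h1.le, h2,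
      Real.rpow_one]
  -- ω^γ in terms of ρ and s
  have hωγ : ∀ m, (ω m) ^ γ = (ρ m * s m) ^ (γ / 2) := by
    intro m
    rw [← hω2 m, ← Real.rpow_natCast (ω m) 2, ← Real.rpow_mul (hω m).le]
    congr 1
    push_cast
    ring
  -- the key algebraic identity
  have hvid : ∀ m, C0 * C ^ (-(γ / 2)) * (ρ m) ^ (-(γ / 2)) * (ω m) ^ γ = v m := by
    intro m
    rw [hωγ m, Real.mul_rpow (hρpos m).le (hs m).le, hsγ m]
    have h1 : (ρ m) ^ (-(γ / 2)) * (ρ m) ^ (γ / 2) = 1 := by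
      rw [← Real.rpow_add (hρpos m)]; simp
    have h2 : C ^ (-(γ / 2)) * C ^ (γ / 2) = 1 := by
      rw [← Real.rpow_add hC]; simp
    calc C0 * C ^ (-(γ / 2)) * (ρ m) ^ (-(γ / 2))
          * ((ρ m) ^ (γ / 2) * (C ^ (γ / 2) * (v m / C0)))
        = (C ^ (-(γ / 2)) * C ^ (γ / 2)) * ((ρ m) ^ (-(γ / 2)) * (ρ m) ^ (γ / 2))
            * (C0 * (v m / C0)) := by ring
      _ = v m := by rw [h1, h2, one_mul, one_mul, mul_div_cancel₀ _ hC0.ne']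
  -- s / u → C
  have hq : Tendsto (fun m => (v m * u m ^ (-(γ / 2)) / C0) ^ (2 / γ)) atTop (nhds 1) := by
    have h1 : Tendsto (fun m => v m * u m ^ (-(γ / 2)) / C0) atTop (nhds 1) := by
      have h2 := hvu.div_const C0
      rwa [div_self hC0.ne'] at h2
    have h2 : ContinuousAt (fun x : ℝ => x ^ (2 / γ)) 1 :=
      Real.continuousAt_rpow_const 1 _ (Or.inl one_ne_zero)
    have h3 := h2.tendsto.comp h1
    simpa [Real.one_rpow, Function.comp_def] using h3
  have hsu : Tendsto (fun m => s m / u m) atTop (nhds C) := by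
    have h1 := hq.const_mul C
    rw [mul_one] at h1
    refine h1.congr fun m => ?_
    have hum := hu m
    have h2 : v m * u m ^ (-(γ / 2)) / C0 = (v m / C0) * u m ^ (-(γ / 2)) := by ring
    rw [h2, Real.mul_rpow (div_pos (hv m) hC0).le (Real.rpow_pos_of_pos hum _).le,
      ← Real.rpow_mul hum.le]
    have h3 : -(γ / 2) * (2 / γ) = -1 := by field_simp
    rw [h3, Real.rpow_neg_one, hsdef]
    rw [div_eq_mul_inv]
    ring
  -- s → ∞
  have hsTop : Tendsto s atTop atTop := by
    have h1 := Tendsto.pos_mul_atTop hC hsu hu'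
    refine h1.congr fun m => ?_
    exact div_mul_cancel₀ _ (hu m).ne'
  -- ω → ∞
  have hω2Top : Tendsto (fun m => ω m ^ 2) atTop atTop := by
    have h1 := Tendsto.pos_mul_atTop hr hρ hsTop
    refine h1.congr fun m => (hω2 m).symm
  have hωTop : Tendsto ω atTop atTop := by
    have h1 : Tendsto (fun m => ((ω m ^ 2 : ℝ)) ^ ((1:ℝ) / 2)) atTop atTop :=
      (tendsto_rpow_atTop (by norm_num)).comp hω2Top
    refine h1.congr fun m => ?_
    rw [← Real.sqrt_eq_rpow, Real.sqrt_sq (hω m).le]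
  -- Term 1
  have hT1 : Tendsto (fun m => (∫ t in Ioi (ω m), d t) * (ω m) ^ γ) atTop (nhds (Cd / γ)) :=
    (tail_mul_tendsto h).comp hωTop
  have hρpow : Tendsto (fun m => (ρ m) ^ (-(γ / 2))) atTop (nhds (r ^ (-(γ / 2)))) :=
    ((Real.continuousAt_rpow_const r _ (Or.inl hr.ne')).tendsto.comp hρ)
  have hterm1 : Tendsto
      (fun m => 2 * (C0 * C ^ (-(γ / 2)) * (ρ m) ^ (-(γ / 2))
        * ((∫ t in Ioi (ω m), d t) * (ω m) ^ γ))) atTop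
      (nhds (2 * (C0 * C ^ (-(γ / 2)) * r ^ (-(γ / 2)) * (Cd / γ)))) :=
    ((hρpow.const_mul (C0 * C ^ (-(γ / 2)))).mul hT1).const_mul 2
  have hconst : C0 * C ^ (-(γ / 2)) * Cd = Real.sqrt C * d (Real.sqrt C) := by
    rw [hC0def]
    have h1 : C ^ ((γ + 1) / 2) * C ^ (-(γ / 2)) = C ^ ((1:ℝ) / 2) := by
      rw [← Real.rpow_add hC]; congr 1; ring
    have h2 : C ^ ((1:ℝ) / 2) = Real.sqrt C := by
      rw [Real.sqrt_eq_rpow]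
    calc C ^ ((γ + 1) / 2) * d (Real.sqrt C) / Cd * C ^ (-(γ / 2)) * Cd
        = (C ^ ((γ + 1) / 2) * C ^ (-(γ / 2))) * d (Real.sqrt C) * (Cd / Cd) := by ring
      _ = Real.sqrt C * d (Real.sqrt C) := by
          rw [h1, h2, div_self h.Cd_pos.ne', mul_one]
  have hcc : 2 * (C0 * C ^ (-(γ / 2)) * r ^ (-(γ / 2)) * (Cd / γ))
      = 2 * Real.sqrt C * d (Real.sqrt C) / γ * r ^ (-(γ / 2)) := by
    linear_combination (2 * r ^ (-(γ / 2)) / γ) * hconst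
  rw [hcc] at hterm1
  have hterm1' : Tendsto (fun m => v m * (2 * (1 - cdf d (ω m)))) atTop
      (nhds (2 * Real.sqrt C * d (Real.sqrt C) / γ * r ^ (-(γ / 2)))) := by
    refine hterm1.congr fun m => ?_
    rw [← tail_eq h (ω m)]
    rw [← hvid m]
    ring
  -- Term 2
  have h1u : ∀ m, (0:ℝ) < 1 + u m := fun m => by linarith [hu m]
  have hapos : ∀ m, 0 < ω m * (1 + u m) ^ (-(1:ℝ) / 2) := fun m =>
    mul_pos (hω m) (Real.rpow_pos_of_pos (h1u m) _)
  have ha2 : ∀ m, (ω m * (1 + u m) ^ (-(1:ℝ) / 2)) ^ 2 = ρ m * (s m / (1 + u m)) := by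
    intro m
    have hpow : ((1 + u m) ^ (-(1:ℝ) / 2)) ^ 2 = (1 + u m)⁻¹ := by
      rw [sq, ← Real.rpow_add (h1u m),
        show (-(1:ℝ) / 2 + -(1:ℝ) / 2) = -1 by norm_num, Real.rpow_neg_one]
    rw [mul_pow, hpow, hω2 m, div_eq_mul_inv]
    ring
  have hfrac : Tendsto (fun m => u m / (1 + u m)) atTop (nhds 1) := by
    have hinv0 : Tendsto (fun m => (u m)⁻¹) atTop (nhds 0) := hu'.inv_tendsto_atTop
    have h1 : Tendsto (fun m => ((u m)⁻¹ + 1)⁻¹) atTop (nhds 1) := by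
      have h2 := (hinv0.add_const 1).inv₀ (by norm_num)
      simpa using h2
    refine h1.congr fun m => ?_
    have hum := (hu m).ne'
    rw [show (u m)⁻¹ + 1 = (1 + u m) / u m by field_simp, inv_div]
  have hsu1 : Tendsto (fun m => s m / (1 + u m)) atTop (nhds C) := by
    have h1 := hsu.mul hfrac
    rw [mul_one] at h1
    refine h1.congr fun m => ?_
    rw [div_mul_div_comm, mul_comm (u m) (1 + u m), mul_div_mul_right _ _ (hu m).ne']
  have ha2T : Tendsto (fun m => (ω m * (1 + u m) ^ (-(1:ℝ) / 2)) ^ 2) atTop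
      (nhds (r * C)) := (hρ.mul hsu1).congr fun m => (ha2 m).symm
  have haT : Tendsto (fun m => ω m * (1 + u m) ^ (-(1:ℝ) / 2)) atTop
      (nhds (Real.sqrt (r * C))) := by
    have h1 := (Real.continuous_sqrt.continuousAt.tendsto.comp ha2T)
    refine h1.congr fun m => ?_
    exact Real.sqrt_sq (hapos m).le
  have hterm2 : Tendsto (fun m => 2 * cdf d (ω m * (1 + u m) ^ (-(1:ℝ) / 2)) - 1) atTop
      (nhds (2 * cdf d (Real.sqrt (r * C)) - 1)) :=
    (((cdf_continuous h).continuousAt.tendsto.comp haT).const_mul 2).sub_const 1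
  exact hterm1'.add hterm2

end MPTaux

open MPTaux

/-- Theorem 1: under the asymptotic framework, a sequence of fixed thresholds `ω_m > 0` has
Bayes risk per test `v_m * t₁(ω_m) + t₂(ω_m)` converging to the optimal value `C₁ + C₂`
(i.e. the procedure is ABOS) if and only if `ω_m ^ 2 / (C * (v_m / C₀) ^ (2/γ)) → 1`. -/
theorem fixed_threshold_ABOS_iff (d : ℝ → ℝ) (γ Cd : ℝ) (h : IsMPT d γ Cd)
    (heven : ∀ x, d (-x) = d x) (hcont : ContinuousOn d (Set.Ioi 0))
    (C : ℝ) (hC : 0 < C)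
    (u v : ℕ → ℝ) (hu : ∀ m, 0 < u m) (hu' : Tendsto u atTop atTop)
    (hv : ∀ m, 0 < v m)
    (hvu : Tendsto (fun m => v m * u m ^ (-(γ / 2))) atTop
      (nhds (C ^ ((γ + 1) / 2) * d (Real.sqrt C) / Cd)))
    (ω : ℕ → ℝ) (hω : ∀ m, 0 < ω m) :
    Tendsto
      (fun m => v m * (2 * (1 - cdf d (ω m)))
        + (2 * cdf d (ω m * (1 + u m) ^ (-(1 : ℝ) / 2)) - 1)) atTop
      (nhds (2 * Real.sqrt C * d (Real.sqrt C) / γ + (2 * cdf d (Real.sqrt C) - 1))) ↔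
    Tendsto
      (fun m => ω m ^ 2 / (C * (v m / (C ^ ((γ + 1) / 2) * d (Real.sqrt C) / Cd)) ^ (2 / γ)))
      atTop (nhds 1) := by
  have hγ := h.gamma_pos
  constructor
  · -- hard direction: ABOS ⇒ ρ → 1
    intro hrisk
    set C0 : ℝ := C ^ ((γ + 1) / 2) * d (Real.sqrt C) / Cd with hC0def
    have hC0 : 0 < C0 := div_pos (mul_pos (Real.rpow_pos_of_pos hC _)
      (h.pos _ (Real.sqrt_pos.mpr hC))) h.Cd_pos
    set s : ℕ → ℝ := fun m => C * (v m / C0) ^ (2 / γ) with hsdef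
    have hs : ∀ m, 0 < s m := fun m =>
      mul_pos hC (Real.rpow_pos_of_pos (div_pos (hv m) hC0) _)
    set ρ : ℕ → ℝ := fun m => ω m ^ 2 / s m with hρdef
    have hρpos : ∀ m, 0 < ρ m := fun m => div_pos (pow_pos (hω m) 2) (hs m)
    have hω2 : ∀ m, ω m ^ 2 = ρ m * s m := fun m => (div_mul_cancel₀ _ (hs m).ne').symm
    -- algebraic identities (as in risk_tendsto)
    have hsγ : ∀ m, (s m) ^ (γ / 2) = C ^ (γ / 2) * (v m / C0) := by
      intro m
      have h1 : (0:ℝ) < v m / C0 := div_pos (hv m) hC0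
      have h2 : (2 / γ) * (γ / 2) = 1 := by field_simp
      rw [hsdef]
      rw [Real.mul_rpow hC.le (Real.rpow_nonneg h1.le _), ← Real.rpow_mul h1.le, h2,
        Real.rpow_one]
    have hωγ : ∀ m, (ω m) ^ γ = (ρ m * s m) ^ (γ / 2) := by
      intro m
      rw [← hω2 m, ← Real.rpow_natCast (ω m) 2, ← Real.rpow_mul (hω m).le]
      congr 1
      push_cast
      ring
    have hvid : ∀ m, C0 * C ^ (-(γ / 2)) * (ρ m) ^ (-(γ / 2)) * (ω m) ^ γ = v m := by
      intro m
      rw [hωγ m, Real.mul_rpow (hρpos m).le (hs m).le, hsγ m]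
      have h1 : (ρ m) ^ (-(γ / 2)) * (ρ m) ^ (γ / 2) = 1 := by
        rw [← Real.rpow_add (hρpos m)]; simp
      have h2 : C ^ (-(γ / 2)) * C ^ (γ / 2) = 1 := by
        rw [← Real.rpow_add hC]; simp
      calc C0 * C ^ (-(γ / 2)) * (ρ m) ^ (-(γ / 2))
            * ((ρ m) ^ (γ / 2) * (C ^ (γ / 2) * (v m / C0)))
          = (C ^ (-(γ / 2)) * C ^ (γ / 2)) * ((ρ m) ^ (-(γ / 2)) * (ρ m) ^ (γ / 2))
              * (C0 * (v m / C0)) := by ring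
        _ = v m := by rw [h1, h2, one_mul, one_mul, mul_div_cancel₀ _ hC0.ne']
    have hq : Tendsto (fun m => (v m * u m ^ (-(γ / 2)) / C0) ^ (2 / γ)) atTop (nhds 1) := by
      have h1 : Tendsto (fun m => v m * u m ^ (-(γ / 2)) / C0) atTop (nhds 1) := by
        have h2 := hvu.div_const C0
        rwa [div_self hC0.ne'] at h2
      have h2 : ContinuousAt (fun x : ℝ => x ^ (2 / γ)) 1 :=
        Real.continuousAt_rpow_const 1 _ (Or.inl one_ne_zero)
      have h3 := h2.tendsto.comp h1
      simpa [Real.one_rpow, Function.comp_def] using h3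
    have hsu : Tendsto (fun m => s m / u m) atTop (nhds C) := by
      have h1 := hq.const_mul C
      rw [mul_one] at h1
      refine h1.congr fun m => ?_
      have hum := hu m
      have h2 : v m * u m ^ (-(γ / 2)) / C0 = (v m / C0) * u m ^ (-(γ / 2)) := by ring
      rw [h2, Real.mul_rpow (div_pos (hv m) hC0).le (Real.rpow_pos_of_pos hum _).le,
        ← Real.rpow_mul hum.le]
      have h3 : -(γ / 2) * (2 / γ) = -1 := by field_simp
      rw [h3, Real.rpow_neg_one, hsdef]
      rw [div_eq_mul_inv]
      ring
    have hfrac : Tendsto (fun m => u m / (1 + u m)) atTop (nhds 1) := by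
      have hinv0 : Tendsto (fun m => (u m)⁻¹) atTop (nhds 0) := hu'.inv_tendsto_atTop
      have h1 : Tendsto (fun m => ((u m)⁻¹ + 1)⁻¹) atTop (nhds 1) := by
        have h2 := (hinv0.add_const 1).inv₀ (by norm_num)
        simpa using h2
      refine h1.congr fun m => ?_
      have hum := (hu m).ne'
      rw [show (u m)⁻¹ + 1 = (1 + u m) / u m by field_simp, inv_div]
    have hsu1 : Tendsto (fun m => s m / (1 + u m)) atTop (nhds C) := by
      have h1 := hsu.mul hfrac
      rw [mul_one] at h1
      refine h1.congr fun m => ?_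
      rw [div_mul_div_comm, mul_comm (u m) (1 + u m), mul_div_mul_right _ _ (hu m).ne']
    have h1u : ∀ m, (0:ℝ) < 1 + u m := fun m => by linarith [hu m]
    have hapos : ∀ m, 0 < ω m * (1 + u m) ^ (-(1:ℝ) / 2) := fun m =>
      mul_pos (hω m) (Real.rpow_pos_of_pos (h1u m) _)
    have ha2 : ∀ m, (ω m * (1 + u m) ^ (-(1:ℝ) / 2)) ^ 2 = ρ m * (s m / (1 + u m)) := by
      intro m
      have hpow : ((1 + u m) ^ (-(1:ℝ) / 2)) ^ 2 = (1 + u m)⁻¹ := by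
        rw [sq, ← Real.rpow_add (h1u m),
          show (-(1:ℝ) / 2 + -(1:ℝ) / 2) = -1 by norm_num, Real.rpow_neg_one]
      rw [mul_pow, hpow, hω2 m, div_eq_mul_inv]
      ring
    have hvTop : Tendsto v atTop atTop := by
      have h1 : Tendsto (fun m => u m ^ (γ / 2)) atTop atTop :=
        (tendsto_rpow_atTop (by positivity)).comp hu'
      have h2 := Tendsto.pos_mul_atTop hC0 hvu h1
      refine h2.congr fun m => ?_
      rw [mul_assoc, ← Real.rpow_add (hu m)]
      simp
    have ht2ge : ∀ m, 0 ≤ 2 * cdf d (ω m * (1 + u m) ^ (-(1:ℝ) / 2)) - 1 := by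
      intro m
      have h0 : cdf d 0 ≤ cdf d (ω m * (1 + u m) ^ (-(1:ℝ) / 2)) :=
        cdf_mono h (hapos m).le
      rw [cdf_zero_eq h heven] at h0
      linarith
    have ht1ge : ∀ m, 0 ≤ v m * (2 * (1 - cdf d (ω m))) := by
      intro m
      have h1 := tail_nonneg h (ω m)
      have h2 := tail_eq h (ω m)
      exact mul_nonneg (hv m).le (by linarith)
    -- suppose not
    by_contra hcon
    rw [Metric.tendsto_atTop] at hcon
    push_neg at hcon
    obtain ⟨ε, hε, hfreq⟩ := hcon
    obtain ⟨φ, hφmono, hφ⟩ := extraction_of_frequently_atTop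
      (frequently_atTop.mpr hfreq)
    set y : ℕ → ℝ := fun k => (1 + ρ (φ k))⁻¹ with hydef
    have hymem : ∀ k, y k ∈ Icc (0:ℝ) 1 := by
      intro k
      have h1 := hρpos (φ k)
      constructor
      · positivity
      · rw [hydef]
        simp only
        rw [inv_le_one_iff₀]
        right
        linarith
    obtain ⟨l, hl, φ₂, hφ₂, hyl⟩ := isCompact_Icc.tendsto_subseq hymem
    set Φ : ℕ → ℕ := φ ∘ φ₂ with hΦdef
    have hΦ : StrictMono Φ := hφmono.comp hφ₂
    have hriskΦ : Tendsto (fun k => v (Φ k) * (2 * (1 - cdf d (ω (Φ k))))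
        + (2 * cdf d (ω (Φ k) * (1 + u (Φ k)) ^ (-(1 : ℝ) / 2)) - 1)) atTop
        (nhds (2 * Real.sqrt C * d (Real.sqrt C) / γ + (2 * cdf d (Real.sqrt C) - 1))) :=
      hrisk.comp hΦ.tendsto_atTop
    by_cases hl0 : l = 0
    · -- ρ ∘ Φ → ∞ : risk has liminf ≥ 1 > optimal value
      have h1p : Tendsto (fun k => 1 + ρ (Φ k)) atTop atTop := by
        have h2 : Tendsto (fun k => y (φ₂ k)) atTop (nhdsWithin 0 (Ioi 0)) := by
          refine tendsto_nhdsWithin_of_tendsto_nhds_of_eventually_within _ ?_ ?_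
          · rw [← hl0]; exact hyl
          · refine Eventually.of_forall fun k => ?_
            have := hρpos (φ (φ₂ k))
            rw [hydef]
            simp only [mem_Ioi]
            positivity
        have h3 := h2.inv_tendsto_nhdsGT_zero
        refine h3.congr fun k => ?_
        simp only [Pi.inv_apply, hydef, Function.comp_apply, inv_inv, hΦdef]
      have hρΦTop : Tendsto (fun k => ρ (Φ k)) atTop atTop := by
        have h2 := tendsto_atTop_add_const_right atTop (-1) h1p
        refine h2.congr fun k => by ring
      have ha2Top : Tendsto (fun k => (ω (Φ k) * (1 + u (Φ k)) ^ (-(1:ℝ) / 2)) ^ 2)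
          atTop atTop := by
        have h2 := Tendsto.pos_mul_atTop hC (hsu1.comp hΦ.tendsto_atTop) hρΦTop
        refine h2.congr fun k => ?_
        simp only [Function.comp_apply]
        rw [ha2 (Φ k)]
        exact mul_comm _ _
      have haTop : Tendsto (fun k => ω (Φ k) * (1 + u (Φ k)) ^ (-(1:ℝ) / 2)) atTop atTop := by
        have h1 : Tendsto (fun k => ((ω (Φ k) * (1 + u (Φ k)) ^ (-(1:ℝ) / 2)) ^ 2) ^ ((1:ℝ)/2))
            atTop atTop := (tendsto_rpow_atTop (by norm_num)).comp ha2Top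
        refine h1.congr fun k => ?_
        rw [← Real.sqrt_eq_rpow, Real.sqrt_sq (hapos (Φ k)).le]
      have hcdfa : Tendsto (fun k => 2 * cdf d (ω (Φ k) * (1 + u (Φ k)) ^ (-(1:ℝ) / 2)) - 1)
          atTop (nhds 1) := by
        have h1 := (((cdf_tendsto_one h).comp haTop).const_mul 2).sub_const 1
        rw [show (2:ℝ) * 1 - 1 = 1 by norm_num] at h1
        exact h1
      have hle : ∀ k, 2 * cdf d (ω (Φ k) * (1 + u (Φ k)) ^ (-(1:ℝ) / 2)) - 1
          ≤ v (Φ k) * (2 * (1 - cdf d (ω (Φ k))))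
            + (2 * cdf d (ω (Φ k) * (1 + u (Φ k)) ^ (-(1 : ℝ) / 2)) - 1) := by
        intro k
        have := ht1ge (Φ k)
        linarith
      have hfin : (1:ℝ) ≤ 2 * Real.sqrt C * d (Real.sqrt C) / γ
          + (2 * cdf d (Real.sqrt C) - 1) :=
        le_of_tendsto_of_tendsto' hcdfa hriskΦ hle
      exact absurd hfin (not_le.mpr (g1_lt_one h hC))
    · -- l ≠ 0
      have hlpos : 0 < l := hl.1.lt_of_ne (Ne.symm hl0)
      have hρΦ : Tendsto (fun k => ρ (Φ k)) atTop (nhds (l⁻¹ - 1)) := by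
        have h1 := (hyl.inv₀ hl0).sub_const 1
        refine h1.congr fun k => ?_
        simp only [Pi.inv_apply, hydef, Function.comp_apply, inv_inv, hΦdef]
        ring
      have hr0 : 0 ≤ l⁻¹ - 1 := by
        have := (one_le_inv₀ hlpos).mpr hl.2
        linarith
      have hrne : l⁻¹ - 1 ≠ 1 := by
        have hdist : Tendsto (fun k => dist (ρ (Φ k)) 1) atTop (nhds (dist (l⁻¹ - 1) 1)) :=
          hρΦ.dist tendsto_const_nhds
        have hεle : ε ≤ dist (l⁻¹ - 1) 1 :=
          ge_of_tendsto' hdist fun k => hφ (φ₂ k)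
        intro hcontra
        rw [hcontra] at hεle
        simp at hεle
        linarith
      by_cases hr0' : l⁻¹ - 1 = 0
      · -- ρ ∘ Φ → 0 : risk blows up
        rw [hr0'] at hρΦ
        by_cases hev : ∀ᶠ k in atTop, 1 < ω (Φ k)
        · -- eventually ω > 1
          have hρpowTop : Tendsto (fun k => (ρ (Φ k)) ^ (-(γ / 2))) atTop atTop := by
            have h1 : Tendsto (fun k => (ρ (Φ k)) ^ (γ / 2)) atTop (nhdsWithin 0 (Ioi 0)) := by
              refine tendsto_nhdsWithin_of_tendsto_nhds_of_eventually_within _ ?_ ?_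
              · have h2 : ContinuousAt (fun x : ℝ => x ^ (γ / 2)) 0 :=
                  Real.continuousAt_rpow_const 0 _ (Or.inr (by positivity))
                have h3 := h2.tendsto.comp hρΦ
                rwa [Real.zero_rpow (by positivity : γ / 2 ≠ 0)] at h3
              · exact Eventually.of_forall fun k =>
                  mem_Ioi.mpr (Real.rpow_pos_of_pos (hρpos (Φ k)) _)
            have h2 := h1.inv_tendsto_nhdsGT_zero
            refine h2.congr fun k => ?_
            simp only [Pi.inv_apply]
            rw [← Real.rpow_neg (hρpos (Φ k)).le]
          set c : ℝ := 2 * (C0 * C ^ (-(γ / 2)) * (d 1 * (1:ℝ) ^ (γ + 1) / γ)) with hcdef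
      
          have hcpos : 0 < c := by
            rw [hcdef]
            have := h.pos 1 one_pos
            have h2 : (0:ℝ) < C ^ (-(γ / 2)) := Real.rpow_pos_of_pos hC _
            have h3 : (0:ℝ) < (1:ℝ) ^ (γ + 1) := Real.rpow_pos_of_pos one_pos _
            positivity
          have hclow : Tendsto (fun k => c * (ρ (Φ k)) ^ (-(γ / 2))) atTop atTop :=
            hρpowTop.const_mul_atTop hcpos
          have hlow : ∀ᶠ k in atTop, c * (ρ (Φ k)) ^ (-(γ / 2))
              ≤ v (Φ k) * (2 * (1 - cdf d (ω (Φ k))))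
                + (2 * cdf d (ω (Φ k) * (1 + u (Φ k)) ^ (-(1 : ℝ) / 2)) - 1) := by
            filter_upwards [hev] with k hk
            set m := Φ k
            have hω1 : (1:ℝ) ≤ ω m := hk.le
            -- T(ω) * ω^γ ≥ ψ(1)/γ
            have htl := le_tail h one_pos hω1
            have hωγpos : (0:ℝ) < (ω m) ^ γ := Real.rpow_pos_of_pos (hω m) _
            have hinv : (ω m) ^ (-γ) * (ω m) ^ γ = 1 := by
              rw [← Real.rpow_add (hω m)]; simp
            have hT : d 1 * (1:ℝ) ^ (γ + 1) / γ ≤ (∫ t in Ioi (ω m), d t) * (ω m) ^ γ := by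
              calc d 1 * (1:ℝ) ^ (γ + 1) / γ
                  = d 1 * (1:ℝ) ^ (γ + 1) * ((ω m) ^ (-γ) * (ω m) ^ γ) / γ := by
                    rw [hinv, mul_one]
                _ = d 1 * (1:ℝ) ^ (γ + 1) * ((ω m) ^ (-γ) / γ) * (ω m) ^ γ := by ring
                _ ≤ (∫ t in Ioi (ω m), d t) * (ω m) ^ γ :=
                    mul_le_mul_of_nonneg_right htl hωγpos.le
            have hfac : (0:ℝ) < C0 * C ^ (-(γ / 2)) * (ρ m) ^ (-(γ / 2)) := by
              have h2 : (0:ℝ) < C ^ (-(γ / 2)) := Real.rpow_pos_of_pos hC _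
              have h3 : (0:ℝ) < (ρ m) ^ (-(γ / 2)) := Real.rpow_pos_of_pos (hρpos m) _
              positivity
            have hkey : c * (ρ m) ^ (-(γ / 2)) ≤ v m * (2 * (1 - cdf d (ω m))) := by
              rw [tail_eq h (ω m), ← hvid m]
              calc c * (ρ m) ^ (-(γ / 2))
                  = 2 * (C0 * C ^ (-(γ / 2)) * (ρ m) ^ (-(γ / 2)))
                      * (d 1 * (1:ℝ) ^ (γ + 1) / γ) := by rw [hcdef]; ring
                _ ≤ 2 * (C0 * C ^ (-(γ / 2)) * (ρ m) ^ (-(γ / 2)))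
                      * ((∫ t in Ioi (ω m), d t) * (ω m) ^ γ) := by
                    apply mul_le_mul_of_nonneg_left hT
                    positivity
                _ = C0 * C ^ (-(γ / 2)) * (ρ m) ^ (-(γ / 2)) * (ω m) ^ γ
                      * (2 * (∫ t in Ioi (ω m), d t)) := by ring
            have := ht2ge m
            linarith
          have hT : Tendsto (fun k => v (Φ k) * (2 * (1 - cdf d (ω (Φ k))))
              + (2 * cdf d (ω (Φ k) * (1 + u (Φ k)) ^ (-(1 : ℝ) / 2)) - 1)) atTop atTop :=
            tendsto_atTop_mono' atTop hlow hclow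
          exact not_tendsto_nhds_of_tendsto_atTop hT _ hriskΦ
        · -- frequently ω ≤ 1
          rw [not_eventually] at hev
          obtain ⟨φ₃, hφ₃, hω1⟩ := extraction_of_frequently_atTop
            (hev.mono fun k hk => not_lt.mp hk)
          have hT1pos : 0 < ∫ t in Ioi (1:ℝ), d t := by
            have h1 := tail_gt h one_pos
            have h2 : (0:ℝ) < d 1 * (1:ℝ) ^ (γ + 1) * ((1:ℝ) ^ (-γ) / γ) := by
              have := h.pos 1 one_pos
              have h3 : (0:ℝ) < (1:ℝ) ^ (γ + 1) := Real.rpow_pos_of_pos one_pos _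
              have h4 : (0:ℝ) < (1:ℝ) ^ (-γ) := Real.rpow_pos_of_pos one_pos _
              positivity
            linarith
          have hlow : ∀ j, 2 * (∫ t in Ioi (1:ℝ), d t) * v (Φ (φ₃ j))
              ≤ v (Φ (φ₃ j)) * (2 * (1 - cdf d (ω (Φ (φ₃ j)))))
                + (2 * cdf d (ω (Φ (φ₃ j)) * (1 + u (Φ (φ₃ j))) ^ (-(1 : ℝ) / 2)) - 1) := by
            intro j
            set m := Φ (φ₃ j)
            have hcm : cdf d (ω m) ≤ cdf d 1 := cdf_mono h (hω1 j)
            have he1 := tail_eq h (1:ℝ)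
            have he2 := tail_eq h (ω m)
            have hTge : (∫ t in Ioi (1:ℝ), d t) ≤ 1 - cdf d (ω m) := by linarith
            have h2 : 2 * (∫ t in Ioi (1:ℝ), d t) * v m ≤ v m * (2 * (1 - cdf d (ω m))) := by
              have := mul_le_mul_of_nonneg_left hTge (by linarith [hv m] : (0:ℝ) ≤ 2 * v m)
              nlinarith
            have := ht2ge m
            linarith
          have hvT : Tendsto (fun j => 2 * (∫ t in Ioi (1:ℝ), d t) * v (Φ (φ₃ j)))
              atTop atTop := by
            have h1 : Tendsto (fun j => v (Φ (φ₃ j))) atTop atTop :=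
              hvTop.comp ((hΦ.comp hφ₃).tendsto_atTop)
            exact h1.const_mul_atTop (by positivity)
          have hT : Tendsto (fun j => v (Φ (φ₃ j)) * (2 * (1 - cdf d (ω (Φ (φ₃ j)))))
              + (2 * cdf d (ω (Φ (φ₃ j)) * (1 + u (Φ (φ₃ j))) ^ (-(1 : ℝ) / 2)) - 1))
              atTop atTop := tendsto_atTop_mono hlow hvT
          exact not_tendsto_nhds_of_tendsto_atTop hT _ (hriskΦ.comp hφ₃.tendsto_atTop)
      · -- 0 < r ≠ 1 : limit equals g(r) > g(1), contradiction
        have hrpos : 0 < l⁻¹ - 1 := lt_of_le_of_ne hr0 (Ne.symm hr0')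
        have hR := risk_tendsto h hC (u := fun k => u (Φ k)) (v := fun k => v (Φ k))
          (fun k => hu (Φ k)) (hu'.comp hΦ.tendsto_atTop) (fun k => hv (Φ k))
          (hvu.comp hΦ.tendsto_atTop) (ω := fun k => ω (Φ k)) (fun k => hω (Φ k))
          hrpos hρΦ
        have heq := tendsto_nhds_unique hriskΦ hR
        exact absurd heq (ne_of_lt (gap h hC hrpos hrne))
  · -- easy direction
    intro hρ
    have hR := risk_tendsto h hC hu hu' hv hvu hω one_pos hρ
    simpa [Real.one_rpow, one_mul] using hR
end
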